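/- arXiv:2302.00994 — 7 statements merged into one kernel-verified Lean document; each statement's English description precedes it below -/
import Mathlib

section
/- In the Woolly Hat graph WH_n(a,b,c,d), for x ∈ {b,c,d}, the vertices B_0 and C_x have a common neighbor if and only if x = 0; in that case the unique common neighbor is A_0. -/
/-- The basic (one-directional) adjacency relation of the Woolly Hat graph.
Vertices are pairs `(t, i)` with `t : Fin 3` (`0` = A-vertex, `1` = B-vertex,
`2` = C-vertex) and `i : ZMod n`. -/
def WHRel (n : ℕ) (a b c d : ZMod n) (u v : Fin 3 × ZMod n) : Prop :=
  (u.1 = 0 ∧ v.1 = 0 ∧ (v.2 = u.2 + a ∨ v.2 = u.2 - a)) ∨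
  (u.1 = 0 ∧ v.1 = 1 ∧ v.2 = u.2) ∨
  (u.1 = 0 ∧ v.1 = 2 ∧ v.2 = u.2) ∨
  (u.1 = 1 ∧ v.1 = 2 ∧ (v.2 = u.2 + b ∨ v.2 = u.2 + c ∨ v.2 = u.2 + d))

/-- The Woolly Hat graph `WH_n(a,b,c,d)`. -/
def WH (n : ℕ) (a b c d : ZMod n) : SimpleGraph (Fin 3 × ZMod n) where
  Adj u v := u ≠ v ∧ (WHRel n a b c d u v ∨ WHRel n a b c d v u)
  symm := ⟨fun u v h => ⟨h.1.symm, h.2.symm⟩⟩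
  loopless := ⟨fun v h => h.1 rfl⟩

theorem common_neighbor_iff (n : ℕ) (hn : 3 ≤ n) (a b c d : ZMod n)
    (ha : 2 * a ≠ 0) (hbc : b ≠ c) (hbd : b ≠ d) (hcd : c ≠ d) :
    ∀ x ∈ ({b, c, d} : Set (ZMod n)),
      ((∃ w : Fin 3 × ZMod n,
          (WH n a b c d).Adj w (1, 0) ∧ (WH n a b c d).Adj w (2, x)) ↔ x = 0) ∧
      (∀ w : Fin 3 × ZMod n,
          (WH n a b c d).Adj w (1, 0) → (WH n a b c d).Adj w (2, x) →
            w = ((0 : Fin 3), (0 : ZMod n))) := by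
  intro x hx
  have key : ∀ w : Fin 3 × ZMod n,
      (WH n a b c d).Adj w (1, 0) → (WH n a b c d).Adj w (2, x) →
        w = ((0 : Fin 3), (0 : ZMod n)) ∧ x = 0 := by
    rintro ⟨t, i⟩ ⟨hne1, h1⟩ ⟨hne2, h2⟩
    simp only [WHRel] at h1 h2
    fin_cases t <;> simp_all
  refine ⟨⟨?_, ?_⟩, fun w h1 h2 => (key w h1 h2).1⟩
  · rintro ⟨w, h1, h2⟩; exact (key w h1 h2).2
  · rintro rfl
    refine ⟨((0 : Fin 3), (0 : ZMod n)), ⟨?_, Or.inl ?_⟩, ⟨?_, Or.inl ?_⟩⟩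
    · simp [Prod.ext_iff]
    · exact Or.inr (Or.inl ⟨rfl, rfl, rfl⟩)
    · simp [Prod.ext_iff]
    · exact Or.inr (Or.inr (Or.inl ⟨rfl, rfl, rfl⟩))
end

section
/- There is no edge-transitive Woolly Hat graph of girth 3. That is, if WH_n(a,b,c,d) is edge-transitive, then no edge of WH_n(a,b,c,d) of the form B_0 C_x (x ∈ {b,c,d}) lies on a 3-cycle, and consequently WH_n(a,b,c,d) edge-transitive implies b, c, d are all nonzero. -/
/-- A graph is edge-transitive if its automorphism group acts transitively on edges. -/
def EdgeTransitive {V : Type*} (G : SimpleGraph V) : Prop :=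
  ∀ e₁ ∈ G.edgeSet, ∀ e₂ ∈ G.edgeSet, ∃ φ : G ≃g G, Sym2.map φ e₁ = e₂


lemma WH_triangle_imp (n : ℕ) (a b c d x : ZMod n) (w : Fin 3 × ZMod n)
    (h1 : (WH n a b c d).Adj w (1, 0)) (h2 : (WH n a b c d).Adj w (2, x)) : x = 0 := by
  obtain ⟨t, i⟩ := w
  obtain ⟨-, h1⟩ := h1
  obtain ⟨-, h2⟩ := h2
  simp only [WHRel] at h1 h2
  fin_cases t <;> simp_all

lemma WH_BC_adj (n : ℕ) (a b c d x : ZMod n) (hx : x = b ∨ x = c ∨ x = d) :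
    (WH n a b c d).Adj (1, 0) (2, x) := by
  refine ⟨by simp, Or.inl ?_⟩
  simp only [WHRel]
  rcases hx with h | h | h <;> simp [h]

lemma WH_no_zero (n : ℕ) (a b c d x y : ZMod n)
    (hx : x = b ∨ x = c ∨ x = d) (hy : y = b ∨ y = c ∨ y = d)
    (hx0 : x = 0) (hy0 : y ≠ 0) (het : EdgeTransitive (WH n a b c d)) : False := by
  have hadjx := WH_BC_adj n a b c d x hx
  have hadjy := WH_BC_adj n a b c d y hy
  obtain ⟨φ, hφ⟩ := het s((1, 0), (2, x)) (by simpa using hadjx)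
    s((1, 0), (2, y)) (by simpa using hadjy)
  have hA1 : (WH n a b c d).Adj (0, 0) (1, 0) := by
    refine ⟨by simp [Prod.ext_iff], Or.inl ?_⟩; simp [WHRel]
  have hA2 : (WH n a b c d).Adj (0, 0) (2, x) := by
    refine ⟨by simp [Prod.ext_iff], Or.inl ?_⟩; simp [WHRel, hx0]
  rw [Sym2.map_pair_eq, Sym2.eq_iff] at hφ
  have hB1 : (WH n a b c d).Adj (φ (0, 0)) (φ (1, 0)) := φ.map_adj_iff.mpr hA1
  have hB2 : (WH n a b c d).Adj (φ (0, 0)) (φ (2, x)) := φ.map_adj_iff.mpr hA2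
  rcases hφ with ⟨h1, h2⟩ | ⟨h1, h2⟩
  · rw [h1] at hB1; rw [h2] at hB2
    exact hy0 (WH_triangle_imp n a b c d y _ hB1 hB2)
  · rw [h1] at hB1; rw [h2] at hB2
    exact hy0 (WH_triangle_imp n a b c d y _ hB2 hB1)

theorem no_edge_transitive_girth_three (n : ℕ) (hn : 3 ≤ n) (a b c d : ZMod n)
    (ha : 2 * a ≠ 0) (hbc : b ≠ c) (hbd : b ≠ d) (hcd : c ≠ d)
    (het : EdgeTransitive (WH n a b c d)) :
    (∀ x ∈ ({b, c, d} : Set (ZMod n)),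
      ¬ ∃ w : Fin 3 × ZMod n,
          (WH n a b c d).Adj w (1, 0) ∧ (WH n a b c d).Adj w (2, x)) ∧
    b ≠ 0 ∧ c ≠ 0 ∧ d ≠ 0 := by
  have hb : b ≠ 0 := fun h => WH_no_zero n a b c d b c (Or.inl rfl)
    (Or.inr (Or.inl rfl)) h (fun hc => hbc (h.trans hc.symm)) het
  have hc : c ≠ 0 := fun h => WH_no_zero n a b c d c b (Or.inr (Or.inl rfl))
    (Or.inl rfl) h (fun hb' => hbc (hb'.trans h.symm)) het
  have hd : d ≠ 0 := fun h => WH_no_zero n a b c d d b (Or.inr (Or.inr rfl))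
    (Or.inl rfl) h (fun hb' => hbd (hb'.trans h.symm)) het
  refine ⟨?_, hb, hc, hd⟩
  rintro x hx ⟨w, h1, h2⟩
  have hx0 := WH_triangle_imp n a b c d x w h1 h2
  simp only [Set.mem_insert_iff, Set.mem_singleton_iff] at hx
  rcases hx with h | h | h
  · exact hb (h ▸ hx0)
  · exact hc (h ▸ hx0)
  · exact hd (h ▸ hx0)
end

section
/- If a Woolly Hat graph WH_n(a,b,c,d) is edge-transitive, then it is arc-transitive. -/
/-- The underlying bijection of the automorphism `σ = ρ^a ∘ τ`:
`A_i ↦ A_{a-i}`, `B_i ↦ C_{a-i}`, `C_i ↦ B_{a-i}`. -/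
def sigmaEquiv (n : ℕ) (a : ZMod n) : (Fin 3 × ZMod n) ≃ (Fin 3 × ZMod n) where
  toFun p := (![0, 2, 1] p.1, a - p.2)
  invFun p := (![0, 2, 1] p.1, a - p.2)
  left_inv p := by
    refine Prod.ext ?_ (by simp)
    have : ∀ t : Fin 3, ![(0 : Fin 3), 2, 1] (![0, 2, 1] t) = t := by decide
    exact this p.1
  right_inv p := by
    refine Prod.ext ?_ (by simp)
    have : ∀ t : Fin 3, ![(0 : Fin 3), 2, 1] (![0, 2, 1] t) = t := by decide
    exact this p.1

lemma whrel_sigma {n : ℕ} {a b c d : ZMod n} {u v : Fin 3 × ZMod n}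
    (h : WHRel n a b c d u v) :
    WHRel n a b c d (sigmaEquiv n a u) (sigmaEquiv n a v) ∨
      WHRel n a b c d (sigmaEquiv n a v) (sigmaEquiv n a u) := by
  obtain ⟨t, i⟩ := u
  obtain ⟨s, j⟩ := v
  rcases h with ⟨h1, h2, h3⟩ | ⟨h1, h2, h3⟩ | ⟨h1, h2, h3⟩ | ⟨h1, h2, h3⟩ <;>
      simp only at h1 h2 <;> subst h1 <;> subst h2
  · -- A_i ~ A_j with j = i ± a
    left
    refine Or.inl ⟨by simp [sigmaEquiv], by simp [sigmaEquiv], ?_⟩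
    show a - j = a - i + a ∨ a - j = a - i - a
    rcases h3 with h3 | h3 <;> subst h3
    · right; show a - (i + a) = a - i - a; ring
    · left; show a - (i - a) = a - i + a; ring
  · -- A_i ~ B_i  ↦  A_{a-i} ~ C_{a-i}
    subst h3
    left
    exact Or.inr (Or.inr (Or.inl ⟨by simp [sigmaEquiv], by simp [sigmaEquiv], rfl⟩))
  · -- A_i ~ C_i  ↦  A_{a-i} ~ B_{a-i}
    subst h3
    left
    exact Or.inr (Or.inl ⟨by simp [sigmaEquiv], by simp [sigmaEquiv], rfl⟩)
  · -- B_i ~ C_j, j = i + x  ↦  C_{a-i} ~ B_{a-j} : reversed rel B_{a-j} ~ C_{a-i}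
    right
    refine Or.inr (Or.inr (Or.inr ⟨by simp [sigmaEquiv], by simp [sigmaEquiv], ?_⟩))
    show a - i = a - j + b ∨ a - i = a - j + c ∨ a - i = a - j + d
    rcases h3 with h3 | h3 | h3 <;> subst h3
    · left; show a - i = a - (i + b) + b; ring
    · right; left; show a - i = a - (i + c) + c; ring
    · right; right; show a - i = a - (i + d) + d; ring

lemma sigma_adj {n : ℕ} {a b c d : ZMod n} {u v : Fin 3 × ZMod n}
    (h : (WH n a b c d).Adj u v) :
    (WH n a b c d).Adj (sigmaEquiv n a u) (sigmaEquiv n a v) := by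
  obtain ⟨hne, hrel⟩ := h
  refine ⟨fun he => hne ((sigmaEquiv n a).injective he), ?_⟩
  rcases hrel with h | h
  · exact whrel_sigma h
  · exact (whrel_sigma h).symm

/-- The automorphism `σ` of the Woolly Hat graph. -/
def sigmaIso (n : ℕ) (a b c d : ZMod n) : WH n a b c d ≃g WH n a b c d where
  toEquiv := sigmaEquiv n a
  map_rel_iff' := by
    intro u v
    constructor
    · intro h
      have := sigma_adj (a := a) (b := b) (c := c) (d := d) h
      simpa [(sigmaEquiv n a).left_inv u, Equiv.apply_symm_apply] using
        (by
          have hu : sigmaEquiv n a (sigmaEquiv n a u) = u := (sigmaEquiv n a).left_inv u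
          have hv : sigmaEquiv n a (sigmaEquiv n a v) = v := (sigmaEquiv n a).left_inv v
          rw [hu, hv] at this
          exact this)
    · exact sigma_adj

lemma base_adj {n : ℕ} {a b c d : ZMod n} (ha : 2 * a ≠ 0) :
    (WH n a b c d).Adj (0, 0) (0, a) := by
  have ha0 : a ≠ 0 := fun h => ha (by rw [h, mul_zero])
  refine ⟨fun h => ha0 (by simpa using (Prod.ext_iff.mp h).2.symm), Or.inl ?_⟩
  exact Or.inl ⟨rfl, rfl, Or.inl (by ring)⟩

lemma to_base {n : ℕ} {a b c d : ZMod n} (ha : 2 * a ≠ 0)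
    (het : EdgeTransitive (WH n a b c d)) {u v : Fin 3 × ZMod n}
    (h : (WH n a b c d).Adj u v) :
    ∃ ψ : WH n a b c d ≃g WH n a b c d, ψ u = (0, 0) ∧ ψ v = (0, a) := by
  obtain ⟨φ, hφ⟩ := het s(u, v) (by simpa using h) s((0, 0), (0, a))
    (by simpa using base_adj (n := n) (b := b) (c := c) (d := d) ha)
  rw [Sym2.map_pair_eq, Sym2.eq_iff] at hφ
  rcases hφ with ⟨h1, h2⟩ | ⟨h1, h2⟩
  · exact ⟨φ, h1, h2⟩
  · refine ⟨φ.trans (sigmaIso n a b c d), ?_, ?_⟩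
    · show sigmaIso n a b c d (φ u) = _
      rw [h1]
      show ((![0,2,1] 0 : Fin 3), a - a) = ((0 : Fin 3), (0 : ZMod n))
      simp
    · show sigmaIso n a b c d (φ v) = _
      rw [h2]
      show ((![0,2,1] 0 : Fin 3), a - 0) = ((0 : Fin 3), a)
      simp

theorem arc_transitive_of_edge_transitive (n : ℕ) (hn : 3 ≤ n) (a b c d : ZMod n)
    (ha : 2 * a ≠ 0) (hbc : b ≠ c) (hbd : b ≠ d) (hcd : c ≠ d)
    (het : EdgeTransitive (WH n a b c d)) :
    ∀ u v u' v' : Fin 3 × ZMod n,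
      (WH n a b c d).Adj u v → (WH n a b c d).Adj u' v' →
        ∃ φ : WH n a b c d ≃g WH n a b c d, φ u = u' ∧ φ v = v' := by
  intro u v u' v' huv hu'v'
  obtain ⟨ψ₁, h1u, h1v⟩ := to_base ha het huv
  obtain ⟨ψ₂, h2u, h2v⟩ := to_base ha het hu'v'
  refine ⟨ψ₁.trans ψ₂.symm, ?_, ?_⟩
  · show ψ₂.symm (ψ₁ u) = u'
    rw [h1u, ← h2u]
    exact ψ₂.symm_apply_apply u'
  · show ψ₂.symm (ψ₁ v) = v'
    rw [h1v, ← h2v]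
    exact ψ₂.symm_apply_apply v'
end

section
/- Let n ≥ 4 be even and let a, b, c, d ∈ ℤ/nℤ with b, c, d pairwise distinct, a, b, d odd, c even, d = 2a + b and 2c = 3a + 3b. Then the map σ defined by: for i even, A_i ↦ B_i, B_i ↦ C_{i+c}, C_i ↦ A_i; for i odd, A_i ↦ C_{i-a+d}, B_i ↦ A_{i+a+b}, C_i ↦ B_{i-b+c-d}, is an automorphism of WH_n(a,b,c,d). -/
lemma zmod_even_iff {n : ℕ} [NeZero n] (h2 : 2 ∣ n) (x : ZMod n) :
    Even x ↔ ZMod.castHom h2 (ZMod 2) x = 0 := by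
  constructor
  · rintro ⟨r, rfl⟩
    rw [map_add]
    exact CharTwo.add_self_eq_zero _
  · intro hx
    rw [← ZMod.natCast_zmod_val x] at hx ⊢
    rw [map_natCast, ZMod.natCast_eq_zero_iff] at hx
    obtain ⟨k, hk⟩ := hx
    exact ⟨(k : ZMod n), by push_cast [hk]; ring⟩

lemma zmod_odd_iff {n : ℕ} [NeZero n] (h2 : 2 ∣ n) (x : ZMod n) :
    Odd x ↔ ZMod.castHom h2 (ZMod 2) x = 1 := by
  constructor
  · rintro ⟨r, rfl⟩
    rw [show 2 * r + 1 = (r + r) + 1 by ring, map_add, map_add, map_one,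
      CharTwo.add_self_eq_zero, zero_add]
  · intro hx
    rw [← ZMod.natCast_zmod_val x] at hx ⊢
    rw [map_natCast] at hx
    have hodd : Odd x.val := by
      rcases Nat.even_or_odd x.val with h | h
      · exfalso
        obtain ⟨k, hk⟩ := h
        rw [hk, Nat.cast_add, CharTwo.add_self_eq_zero] at hx
        exact absurd hx (by decide)
      · exact h
    obtain ⟨k, hk⟩ := hodd
    exact ⟨(k : ZMod n), by push_cast [hk]; ring⟩

lemma zmod_odd_not_even {n : ℕ} [NeZero n] (h2 : 2 ∣ n) {x : ZMod n} (hx : Odd x) :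
    ¬ Even x := by
  rw [zmod_even_iff h2]
  rw [zmod_odd_iff h2] at hx
  rw [hx]
  decide

lemma zmod_even_add_iff {n : ℕ} [NeZero n] (h2 : 2 ∣ n) (x y : ZMod n) :
    Even (x + y) ↔ (Even x ↔ Even y) := by
  simp only [zmod_even_iff h2, map_add]
  have h01 : ∀ z : ZMod 2, z = 0 ∨ z = 1 := by decide
  rcases h01 (ZMod.castHom h2 (ZMod 2) x) with h | h <;>
    rcases h01 (ZMod.castHom h2 (ZMod 2) y) with h' | h' <;>
      rw [h, h'] <;> decide

lemma zmod_even_sub_iff {n : ℕ} [NeZero n] (h2 : 2 ∣ n) (x y : ZMod n) :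
    Even (x - y) ↔ (Even x ↔ Even y) := by
  rw [sub_eq_add_neg, zmod_even_add_iff h2, even_neg]

open scoped Classical in
/-- The parity-based map `σ`. -/
noncomputable def sigmaFun (n : ℕ) (a b c d : ZMod n) (v : Fin 3 × ZMod n) :
    Fin 3 × ZMod n :=
  if Even v.2 then
    if v.1 = 0 then (1, v.2) else if v.1 = 1 then (2, v.2 + c) else (0, v.2)
  else
    if v.1 = 0 then (2, v.2 - a + d)
    else if v.1 = 1 then (0, v.2 + a + b)
    else (1, v.2 - b + c - d)

theorem sigma_is_automorphism (n : ℕ) (hn : 4 ≤ n) (hneven : Even n) (a b c d : ZMod n)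
    (hbc : b ≠ c) (hbd : b ≠ d) (hcd : c ≠ d)
    (haodd : Odd a) (hbodd : Odd b) (hdodd : Odd d) (hceven : Even c)
    (hd : d = 2 * a + b) (h2c : 2 * c = 3 * a + 3 * b) :
    ∃ e : WH n a b c d ≃g WH n a b c d,
      ∀ v : Fin 3 × ZMod n, e v = sigmaFun n a b c d v := by
  classical
  haveI : NeZero n := ⟨by omega⟩
  have h2 : (2 : ℕ) ∣ n := hneven.two_dvd
  have hEa : ¬ Even a := zmod_odd_not_even h2 haodd
  have hEb : ¬ Even b := zmod_odd_not_even h2 hbodd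
  have hEd : ¬ Even d := zmod_odd_not_even h2 hdodd
  have ha0 : a ≠ 0 := fun h => hEa (h ▸ Even.zero)
  have key : ∀ x y : ZMod n, Even (x + y) ↔ (Even x ↔ Even y) := zmod_even_add_iff h2
  have key2 : ∀ x y : ZMod n, Even (x - y) ↔ (Even x ↔ Even y) := zmod_even_sub_iff h2
  set G := WH n a b c d with hG
  set σ := sigmaFun n a b c d with hσdef
  -- unfolding lemmas for σ
  have sAe : ∀ i : ZMod n, Even i → σ (0, i) = (1, i) := fun i h => by
    simp [hσdef, sigmaFun, h]
  have sBe : ∀ i : ZMod n, Even i → σ (1, i) = (2, i + c) := fun i h => by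
    simp [hσdef, sigmaFun, h]
  have sCe : ∀ i : ZMod n, Even i → σ (2, i) = (0, i) := fun i h => by
    simp [hσdef, sigmaFun, h]
  have sAo : ∀ i : ZMod n, ¬ Even i → σ (0, i) = (2, i - a + d) := fun i h => by
    simp [hσdef, sigmaFun, h]
  have sBo : ∀ i : ZMod n, ¬ Even i → σ (1, i) = (0, i + a + b) := fun i h => by
    simp [hσdef, sigmaFun, h]
  have sCo : ∀ i : ZMod n, ¬ Even i → σ (2, i) = (1, i - b + c - d) := fun i h => by
    simp [hσdef, sigmaFun, h]
  -- adjacency constructors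
  have adjAA : ∀ i j : ZMod n, (j = i + a ∨ j = i - a) → G.Adj (0, i) (0, j) := by
    intro i j hj
    refine ⟨?_, Or.inl (Or.inl ⟨rfl, rfl, hj⟩)⟩
    intro hcon
    have hij : i = j := congrArg Prod.snd hcon
    rcases hj with rfl | rfl
    · exact ha0 (by linear_combination -hij)
    · exact ha0 (by linear_combination hij)
  have adjAB : ∀ i j : ZMod n, j = i → G.Adj (0, i) (1, j) := by
    rintro i j rfl
    exact ⟨by simp [Prod.ext_iff], Or.inl (Or.inr (Or.inl ⟨rfl, rfl, rfl⟩))⟩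
  have adjAC : ∀ i j : ZMod n, j = i → G.Adj (0, i) (2, j) := by
    rintro i j rfl
    exact ⟨by simp [Prod.ext_iff], Or.inl (Or.inr (Or.inr (Or.inl ⟨rfl, rfl, rfl⟩)))⟩
  have adjBC : ∀ i j : ZMod n, (j = i + b ∨ j = i + c ∨ j = i + d) → G.Adj (1, i) (2, j) := by
    intro i j hj
    exact ⟨by simp [Prod.ext_iff], Or.inl (Or.inr (Or.inr (Or.inr ⟨rfl, rfl, hj⟩)))⟩
  -- σ sends related vertices to adjacent vertices
  have hrel : ∀ u v : Fin 3 × ZMod n, WHRel n a b c d u v → G.Adj (σ u) (σ v) := by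
    rintro ⟨t, i⟩ ⟨s, j⟩ h
    rcases h with ⟨ht, hs, hj | hj⟩ | ⟨ht, hs, hj⟩ | ⟨ht, hs, hj⟩ | ⟨ht, hs, hj | hj | hj⟩ <;>
        obtain rfl : t = _ := ht <;> obtain rfl : s = _ := hs
    · -- A_i ~ A_{i+a}
      have hj' : j = i + a := hj
      rw [hj']
      by_cases hi : Even i
      · have hja : ¬ Even (i + a) := by simp [key, hi, hEa]
        rw [sAe i hi, sAo _ hja]
        exact adjBC i _ (Or.inr (Or.inr (by ring)))
      · have hja : Even (i + a) := by simp [key, hi, hEa]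
        rw [sAo i hi, sAe _ hja]
        exact (adjBC (i + a) (i - a + d) (Or.inl (by linear_combination hd))).symm
    · -- A_i ~ A_{i-a}
      have hj' : j = i - a := hj
      rw [hj']
      by_cases hi : Even i
      · have hja : ¬ Even (i - a) := by simp [key2, hi, hEa]
        rw [sAe i hi, sAo _ hja]
        exact adjBC i _ (Or.inl (by linear_combination hd))
      · have hja : Even (i - a) := by simp [key2, hi, hEa]
        rw [sAo i hi, sAe _ hja]
        exact (adjBC (i - a) (i - a + d) (Or.inr (Or.inr (by ring)))).symm
    · -- A_i ~ B_i
      have hj' : j = i := hj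
      rw [hj']
      by_cases hi : Even i
      · rw [sAe i hi, sBe i hi]
        exact adjBC i _ (Or.inr (Or.inl rfl))
      · rw [sAo i hi, sBo i hi]
        exact (adjAC (i + a + b) (i - a + d) (by linear_combination hd)).symm
    · -- A_i ~ C_i
      have hj' : j = i := hj
      rw [hj']
      by_cases hi : Even i
      · rw [sAe i hi, sCe i hi]
        exact (adjAB i i rfl).symm
      · rw [sAo i hi, sCo i hi]
        exact (adjBC (i - b + c - d) (i - a + d)
          (Or.inr (Or.inl (by linear_combination 2 * hd - h2c)))).symm
    · -- B_i ~ C_{i+b}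
      have hj' : j = i + b := hj
      rw [hj']
      by_cases hi : Even i
      · have hjb : ¬ Even (i + b) := by simp [key, hi, hEb]
        rw [sBe i hi, sCo _ hjb]
        exact (adjBC (i + b - b + c - d) (i + c) (Or.inr (Or.inr (by ring)))).symm
      · have hjb : Even (i + b) := by simp [key, hi, hEb]
        rw [sBo i hi, sCe _ hjb]
        exact adjAA (i + a + b) (i + b) (Or.inr (by ring))
    · -- B_i ~ C_{i+c}
      have hj' : j = i + c := hj
      rw [hj']
      by_cases hi : Even i
      · have hjc : Even (i + c) := by simp [key, hi, hceven]
        rw [sBe i hi, sCe _ hjc]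
        exact (adjAC (i + c) (i + c) rfl).symm
      · have hjc : ¬ Even (i + c) := by simp [key, hi, hceven]
        rw [sBo i hi, sCo _ hjc]
        exact adjAB (i + a + b) (i + c - b + c - d) (by linear_combination h2c - hd)
    · -- B_i ~ C_{i+d}
      have hj' : j = i + d := hj
      rw [hj']
      by_cases hi : Even i
      · have hjd : ¬ Even (i + d) := by simp [key, hi, hEd]
        rw [sBe i hi, sCo _ hjd]
        exact (adjBC (i + d - b + c - d) (i + c) (Or.inl (by ring))).symm
      · have hjd : Even (i + d) := by simp [key, hi, hEd]
        rw [sBo i hi, sCe _ hjd]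
        exact adjAA (i + a + b) (i + d) (Or.inl (by linear_combination hd))
  have hfwd : ∀ u v : Fin 3 × ZMod n, G.Adj u v → G.Adj (σ u) (σ v) := by
    intro u v h
    rcases h.2 with h' | h'
    · exact hrel u v h'
    · exact (hrel v u h').symm
  -- σ preserves the parity of the index
  have tcases : ∀ z : Fin 3, z = 0 ∨ z = 1 ∨ z = 2 := by decide
  have hp : ∀ v : Fin 3 × ZMod n, Even (σ v).2 ↔ Even v.2 := by
    rintro ⟨t, i⟩
    by_cases hi : Even i <;> rcases tcases t with rfl | rfl | rfl <;>
      simp [hσdef, sigmaFun, hi, key, key2, hEa, hEb, hEd, hceven]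
  have hinj : Function.Injective σ := by
    rintro ⟨t, i⟩ ⟨s, j⟩ h
    have hpar : Even i ↔ Even j :=
      ((hp (t, i)).symm.trans (by rw [h])).trans (hp (s, j))
    by_cases hi : Even i
    · have hj : Even j := hpar.mp hi
      rcases tcases t with rfl | rfl | rfl <;> rcases tcases s with rfl | rfl | rfl <;>
        simp [hσdef, sigmaFun, hi, hj, Prod.ext_iff] at h ⊢ <;> exact h
    · have hj : ¬ Even j := fun h' => hi (hpar.mpr h')
      rcases tcases t with rfl | rfl | rfl <;> rcases tcases s with rfl | rfl | rfl <;>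
        simp [hσdef, sigmaFun, hi, hj, Prod.ext_iff] at h ⊢ <;> exact h
  have hbij : Function.Bijective σ := Finite.injective_iff_bijective.mp hinj
  let e : Equiv.Perm (Fin 3 × ZMod n) := Equiv.ofBijective σ hbij
  have he : ∀ v, e v = σ v := fun _ => rfl
  have hiter : ∀ (k : ℕ) (u v : Fin 3 × ZMod n),
      G.Adj u v → G.Adj ((e ^ k) u) ((e ^ k) v) := by
    intro k
    induction k with
    | zero => intro u v h; simpa using h
    | succ k ih =>
      intro u v h
      rw [pow_succ']
      simpa [Equiv.Perm.mul_apply, he] using hfwd _ _ (ih u v h)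
  have hopos : 0 < orderOf e := orderOf_pos e
  have hinvp : e⁻¹ = e ^ (orderOf e - 1) := by
    apply inv_eq_of_mul_eq_one_right
    rw [← pow_succ', Nat.sub_add_cancel hopos]
    exact pow_orderOf_eq_one e
  have hbwd : ∀ u v : Fin 3 × ZMod n, G.Adj (e u) (e v) → G.Adj u v := by
    intro u v h
    have h2' := hiter (orderOf e - 1) _ _ h
    rw [← hinvp] at h2'
    simpa using h2'
  exact ⟨{ toEquiv := e, map_rel_iff' := fun {u v} => ⟨hbwd u v, hfwd u v⟩ }, fun v => rfl⟩
end

section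
/- Let n ≥ 4 be even, a, b, c, d ∈ ℤ/nℤ with b, c, d pairwise distinct, a, b, d odd, c even, d = 2a + b and 2c = 3a + 3b. Then the Woolly Hat graph WH_n(a,b,c,d) is vertex-transitive. -/
section Aux

variable {n : ℕ} {a b c d : ZMod n}

lemma fin3_cases (t : Fin 3) : t = 0 ∨ t = 1 ∨ t = 2 := by fin_cases t <;> simp

lemma zmod2_cases (x : ZMod 2) : x = 0 ∨ x = 1 := by revert x; decide

/-- Build a graph isomorphism of `WH` from an involutive vertex map that sends the
basic relation into the adjacency relation. -/
noncomputable def whIsoOfInvolutive (f : Fin 3 × ZMod n → Fin 3 × ZMod n)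
    (hf : Function.Involutive f)
    (hrel : ∀ u v, WHRel n a b c d u v →
      WHRel n a b c d (f u) (f v) ∨ WHRel n a b c d (f v) (f u)) :
    WH n a b c d ≃g WH n a b c d where
  toEquiv := hf.toPerm f
  map_rel_iff' := by
    have key : ∀ u v, (WH n a b c d).Adj u v → (WH n a b c d).Adj (f u) (f v) := by
      rintro u v ⟨hne, h⟩
      refine ⟨fun he => hne (hf.injective he), ?_⟩
      rcases h with h | h
      · exact hrel u v h
      · exact (hrel v u h).symm
    intro u v
    constructor
    · intro h
      have := key _ _ h
      simpa [hf u, hf v] using this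
    · intro h
      exact key u v h

/-- The underlying equivalence of the shift automorphism. -/
def whShiftEquiv (n : ℕ) (s : ZMod n) : (Fin 3 × ZMod n) ≃ (Fin 3 × ZMod n) where
  toFun u := (u.1, u.2 + s)
  invFun u := (u.1, u.2 - s)
  left_inv := by rintro ⟨t, i⟩; simp
  right_inv := by rintro ⟨t, i⟩; simp

lemma whrel_shift (s : ZMod n) {u v : Fin 3 × ZMod n} (h : WHRel n a b c d u v) :
    WHRel n a b c d (u.1, u.2 + s) (v.1, v.2 + s) := by
  rcases h with ⟨ht, hs', hj | hj⟩ | ⟨ht, hs', hj⟩ | ⟨ht, hs', hj⟩ |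
    ⟨ht, hs', hj | hj | hj⟩
  · exact Or.inl ⟨ht, hs', Or.inl (by simp only; rw [hj]; ring)⟩
  · exact Or.inl ⟨ht, hs', Or.inr (by simp only; rw [hj]; ring)⟩
  · exact Or.inr (Or.inl ⟨ht, hs', by simp only; rw [hj]⟩)
  · exact Or.inr (Or.inr (Or.inl ⟨ht, hs', by simp only; rw [hj]⟩))
  · exact Or.inr (Or.inr (Or.inr ⟨ht, hs', Or.inl (by simp only; rw [hj]; ring)⟩))
  · exact Or.inr (Or.inr (Or.inr ⟨ht, hs', Or.inr (Or.inl (by simp only; rw [hj]; ring))⟩))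
  · exact Or.inr (Or.inr (Or.inr ⟨ht, hs', Or.inr (Or.inr (by simp only; rw [hj]; ring))⟩))

/-- The shift automorphism. -/
def whShiftIso (n : ℕ) (a b c d : ZMod n) (s : ZMod n) :
    WH n a b c d ≃g WH n a b c d where
  toEquiv := whShiftEquiv n s
  map_rel_iff' := by
    rintro ⟨t, i⟩ ⟨t', j⟩
    show (WH n a b c d).Adj (t, i + s) (t', j + s) ↔ (WH n a b c d).Adj (t, i) (t', j)
    constructor
    · rintro ⟨hne, h⟩
      constructor
      · intro he
        apply hne
        have h1 : t = t' := congrArg Prod.fst he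
        have h2 : i = j := congrArg Prod.snd he
        rw [h1, h2]
      · rcases h with h | h
        · left
          have := whrel_shift (-s) h
          simpa using this
        · right
          have := whrel_shift (-s) h
          simpa using this
    · rintro ⟨hne, h⟩
      constructor
      · intro he
        apply hne
        have h1 : t = t' := congrArg Prod.fst he
        have h2 : i + s = j + s := congrArg Prod.snd he
        have h2' : i = j := add_right_cancel h2
        rw [h1, h2']
      · rcases h with h | h
        · exact Or.inl (whrel_shift s h)
        · exact Or.inr (whrel_shift s h)

/-- The reflection vertex map: `A_i ↦ A_{-i}`, `B_i ↦ C_{-i}`, `C_i ↦ B_{-i}`. -/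
def whTauFun (n : ℕ) (u : Fin 3 × ZMod n) : Fin 3 × ZMod n :=
  if u.1 = 0 then (0, -u.2) else if u.1 = 1 then (2, -u.2) else (1, -u.2)

lemma whTauFun_zero (i : ZMod n) : whTauFun n ((0 : Fin 3), i) = (0, -i) := by
  simp [whTauFun]

lemma whTauFun_one (i : ZMod n) : whTauFun n ((1 : Fin 3), i) = (2, -i) := by
  simp [whTauFun]

lemma whTauFun_two (i : ZMod n) : whTauFun n ((2 : Fin 3), i) = (1, -i) := by
  simp [whTauFun]

lemma whTauFun_involutive : Function.Involutive (whTauFun n) := by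
  rintro ⟨t, i⟩
  rcases fin3_cases t with rfl | rfl | rfl
  · rw [whTauFun_zero, whTauFun_zero, neg_neg]
  · rw [whTauFun_one, whTauFun_two, neg_neg]
  · rw [whTauFun_two, whTauFun_one, neg_neg]

lemma whTauFun_rel : ∀ u v, WHRel n a b c d u v →
    WHRel n a b c d (whTauFun n u) (whTauFun n v) ∨
    WHRel n a b c d (whTauFun n v) (whTauFun n u) := by
  rintro ⟨t, i⟩ ⟨s, j⟩ h
  rcases h with ⟨ht, hs, hj | hj⟩ | ⟨ht, hs, hj⟩ | ⟨ht, hs, hj⟩ | ⟨ht, hs, hj | hj | hj⟩ <;>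
    simp only at ht hs hj <;> subst ht <;> subst hs <;> subst hj
  · rw [whTauFun_zero, whTauFun_zero]
    exact Or.inl (Or.inl ⟨rfl, rfl, Or.inr (by ring)⟩)
  · rw [whTauFun_zero, whTauFun_zero]
    exact Or.inl (Or.inl ⟨rfl, rfl, Or.inl (by ring)⟩)
  · rw [whTauFun_zero, whTauFun_one]
    exact Or.inl (Or.inr (Or.inr (Or.inl ⟨rfl, rfl, rfl⟩)))
  · rw [whTauFun_zero, whTauFun_two]
    exact Or.inl (Or.inr (Or.inl ⟨rfl, rfl, rfl⟩))
  · rw [whTauFun_one, whTauFun_two]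
    exact Or.inr (Or.inr (Or.inr (Or.inr ⟨rfl, rfl, Or.inl (by ring)⟩)))
  · rw [whTauFun_one, whTauFun_two]
    exact Or.inr (Or.inr (Or.inr (Or.inr ⟨rfl, rfl, Or.inr (Or.inl (by ring))⟩)))
  · rw [whTauFun_one, whTauFun_two]
    exact Or.inr (Or.inr (Or.inr (Or.inr ⟨rfl, rfl, Or.inr (Or.inr (by ring))⟩)))

/-- The type-mixing vertex map `σ`, defined using the parity homomorphism
`ZMod n →+* ZMod 2`. -/
def whSigmaFun (n : ℕ) (hn2 : 2 ∣ n) (a b c : ZMod n) (u : Fin 3 × ZMod n) :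
    Fin 3 × ZMod n :=
  if u.1 = 0 then
    (if ZMod.castHom hn2 (ZMod 2) u.2 = 0 then ((1 : Fin 3), -u.2)
      else (2, a + b - u.2))
  else if u.1 = 1 then
    (if ZMod.castHom hn2 (ZMod 2) u.2 = 0 then ((0 : Fin 3), -u.2)
      else (1, a + b - c - u.2))
  else
    (if ZMod.castHom hn2 (ZMod 2) u.2 = 0 then ((2 : Fin 3), c - u.2)
      else (0, a + b - u.2))

section Sigma

variable {hn2 : 2 ∣ n}

lemma whSigmaFun_0e {i : ZMod n} (h : ZMod.castHom hn2 (ZMod 2) i = 0) :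
    whSigmaFun n hn2 a b c ((0 : Fin 3), i) = (1, -i) := by
  have h' : ZMod.cast i = (0 : ZMod 2) := by simpa using h
  simp [whSigmaFun, h']

lemma whSigmaFun_0o {i : ZMod n} (h : ZMod.castHom hn2 (ZMod 2) i ≠ 0) :
    whSigmaFun n hn2 a b c ((0 : Fin 3), i) = (2, a + b - i) := by
  have h' : ¬(ZMod.cast i = (0 : ZMod 2)) := by simpa using h
  simp [whSigmaFun, h']

lemma whSigmaFun_1e {i : ZMod n} (h : ZMod.castHom hn2 (ZMod 2) i = 0) :
    whSigmaFun n hn2 a b c ((1 : Fin 3), i) = (0, -i) := by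
  have h' : ZMod.cast i = (0 : ZMod 2) := by simpa using h
  simp [whSigmaFun, h']

lemma whSigmaFun_1o {i : ZMod n} (h : ZMod.castHom hn2 (ZMod 2) i ≠ 0) :
    whSigmaFun n hn2 a b c ((1 : Fin 3), i) = (1, a + b - c - i) := by
  have h' : ¬(ZMod.cast i = (0 : ZMod 2)) := by simpa using h
  simp [whSigmaFun, h']

lemma whSigmaFun_2e {i : ZMod n} (h : ZMod.castHom hn2 (ZMod 2) i = 0) :
    whSigmaFun n hn2 a b c ((2 : Fin 3), i) = (2, c - i) := by
  have h' : ZMod.cast i = (0 : ZMod 2) := by simpa using h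
  simp [whSigmaFun, h']

lemma whSigmaFun_2o {i : ZMod n} (h : ZMod.castHom hn2 (ZMod 2) i ≠ 0) :
    whSigmaFun n hn2 a b c ((2 : Fin 3), i) = (0, a + b - i) := by
  have h' : ¬(ZMod.cast i = (0 : ZMod 2)) := by simpa using h
  simp [whSigmaFun, h']

lemma whSigmaFun_involutive (hπa : ZMod.castHom hn2 (ZMod 2) a = 1)
    (hπb : ZMod.castHom hn2 (ZMod 2) b = 1)
    (hπc : ZMod.castHom hn2 (ZMod 2) c = 0) :
    Function.Involutive (whSigmaFun n hn2 a b c) := by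
  set π := ZMod.castHom hn2 (ZMod 2) with hπ
  have h11 : (1 : ZMod 2) + 1 = 0 := by decide
  rintro ⟨t, i⟩
  rcases fin3_cases t with rfl | rfl | rfl
  · by_cases hp : π i = 0
    · have h1 : π (-i) = 0 := by rw [map_neg, hp, neg_zero]
      rw [whSigmaFun_0e hp, whSigmaFun_1e h1, neg_neg]
    · have hp1 : π i = 1 := (zmod2_cases (π i)).resolve_left hp
      have h1 : π (a + b - i) ≠ 0 := by
        rw [map_sub, map_add, hπa, hπb, hp1, h11]; decide
      rw [whSigmaFun_0o hp, whSigmaFun_2o h1]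
      exact Prod.ext rfl (by ring)
  · by_cases hp : π i = 0
    · have h1 : π (-i) = 0 := by rw [map_neg, hp, neg_zero]
      rw [whSigmaFun_1e hp, whSigmaFun_0e h1, neg_neg]
    · have hp1 : π i = 1 := (zmod2_cases (π i)).resolve_left hp
      have h1 : π (a + b - c - i) ≠ 0 := by
        rw [map_sub, map_sub, map_add, hπa, hπb, hπc, hp1, h11]; decide
      rw [whSigmaFun_1o hp, whSigmaFun_1o h1]
      exact Prod.ext rfl (by ring)
  · by_cases hp : π i = 0
    · have h1 : π (c - i) = 0 := by rw [map_sub, hπc, hp, sub_zero]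
      rw [whSigmaFun_2e hp, whSigmaFun_2e h1]
      exact Prod.ext rfl (by ring)
    · have hp1 : π i = 1 := (zmod2_cases (π i)).resolve_left hp
      have h1 : π (a + b - i) ≠ 0 := by
        rw [map_sub, map_add, hπa, hπb, hp1, h11]; decide
      rw [whSigmaFun_2o hp, whSigmaFun_0o h1]
      exact Prod.ext rfl (by ring)

lemma whSigmaFun_rel (hπa : ZMod.castHom hn2 (ZMod 2) a = 1)
    (hπb : ZMod.castHom hn2 (ZMod 2) b = 1)
    (hπc : ZMod.castHom hn2 (ZMod 2) c = 0)
    (hπd : ZMod.castHom hn2 (ZMod 2) d = 1)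
    (hd : d = 2 * a + b) (h2c : 2 * c = 3 * a + 3 * b) :
    ∀ u v, WHRel n a b c d u v →
      WHRel n a b c d (whSigmaFun n hn2 a b c u) (whSigmaFun n hn2 a b c v) ∨
      WHRel n a b c d (whSigmaFun n hn2 a b c v) (whSigmaFun n hn2 a b c u) := by
  set π := ZMod.castHom hn2 (ZMod 2) with hπ
  have h11 : (1 : ZMod 2) + 1 = 0 := by decide
  rintro ⟨t, i⟩ ⟨s, j⟩ h
  rcases h with ⟨ht, hs, hj | hj⟩ | ⟨ht, hs, hj⟩ | ⟨ht, hs, hj⟩ |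
    ⟨ht, hs, hj | hj | hj⟩ <;> simp only at ht hs hj <;>
    subst ht <;> subst hs <;> subst hj
  -- A_i ~ A_{i+a}
  · by_cases hp : π i = 0
    · have h1 : π (i + a) ≠ 0 := by rw [map_add, hπa, hp, zero_add]; decide
      rw [whSigmaFun_0e hp, whSigmaFun_0o h1]
      exact Or.inl (Or.inr (Or.inr (Or.inr ⟨rfl, rfl, Or.inl (by ring)⟩)))
    · have hp1 : π i = 1 := (zmod2_cases (π i)).resolve_left hp
      have h1 : π (i + a) = 0 := by rw [map_add, hπa, hp1, h11]
      rw [whSigmaFun_0o hp, whSigmaFun_0e h1]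
      exact Or.inr (Or.inr (Or.inr (Or.inr ⟨rfl, rfl, Or.inr (Or.inr
        (by linear_combination -hd))⟩)))
  -- A_i ~ A_{i-a}
  · by_cases hp : π i = 0
    · have h1 : π (i - a) ≠ 0 := by rw [map_sub, hπa, hp, zero_sub]; decide
      rw [whSigmaFun_0e hp, whSigmaFun_0o h1]
      exact Or.inl (Or.inr (Or.inr (Or.inr ⟨rfl, rfl, Or.inr (Or.inr
        (by linear_combination -hd))⟩)))
    · have hp1 : π i = 1 := (zmod2_cases (π i)).resolve_left hp
      have h1 : π (i - a) = 0 := by rw [map_sub, hπa, hp1]; decide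
      rw [whSigmaFun_0o hp, whSigmaFun_0e h1]
      exact Or.inr (Or.inr (Or.inr (Or.inr ⟨rfl, rfl, Or.inl (by ring)⟩)))
  -- A_i ~ B_i
  · by_cases hp : π j = 0
    · rw [whSigmaFun_0e hp, whSigmaFun_1e hp]
      exact Or.inr (Or.inr (Or.inl ⟨rfl, rfl, rfl⟩))
    · rw [whSigmaFun_0o hp, whSigmaFun_1o hp]
      exact Or.inr (Or.inr (Or.inr (Or.inr ⟨rfl, rfl, Or.inr (Or.inl (by ring))⟩)))
  -- A_i ~ C_i
  · by_cases hp : π j = 0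
    · rw [whSigmaFun_0e hp, whSigmaFun_2e hp]
      exact Or.inl (Or.inr (Or.inr (Or.inr ⟨rfl, rfl, Or.inr (Or.inl (by ring))⟩)))
    · rw [whSigmaFun_0o hp, whSigmaFun_2o hp]
      exact Or.inr (Or.inr (Or.inr (Or.inl ⟨rfl, rfl, rfl⟩)))
  -- B_i ~ C_{i+b}
  · by_cases hp : π i = 0
    · have h1 : π (i + b) ≠ 0 := by rw [map_add, hπb, hp, zero_add]; decide
      rw [whSigmaFun_1e hp, whSigmaFun_2o h1]
      exact Or.inl (Or.inl ⟨rfl, rfl, Or.inl (by ring)⟩)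
    · have hp1 : π i = 1 := (zmod2_cases (π i)).resolve_left hp
      have h1 : π (i + b) = 0 := by rw [map_add, hπb, hp1, h11]
      rw [whSigmaFun_1o hp, whSigmaFun_2e h1]
      exact Or.inl (Or.inr (Or.inr (Or.inr ⟨rfl, rfl, Or.inr (Or.inr
        (by linear_combination h2c - hd))⟩)))
  -- B_i ~ C_{i+c}
  · by_cases hp : π i = 0
    · have h1 : π (i + c) = 0 := by rw [map_add, hπc, hp, zero_add]
      rw [whSigmaFun_1e hp, whSigmaFun_2e h1]
      exact Or.inl (Or.inr (Or.inr (Or.inl ⟨rfl, rfl, by ring⟩)))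
    · have h1 : π (i + c) ≠ 0 := by rw [map_add, hπc, add_zero]; exact hp
      rw [whSigmaFun_1o hp, whSigmaFun_2o h1]
      exact Or.inr (Or.inr (Or.inl ⟨rfl, rfl, by ring⟩))
  -- B_i ~ C_{i+d}
  · by_cases hp : π i = 0
    · have h1 : π (i + d) ≠ 0 := by rw [map_add, hπd, hp, zero_add]; decide
      rw [whSigmaFun_1e hp, whSigmaFun_2o h1]
      exact Or.inl (Or.inl ⟨rfl, rfl, Or.inr (by linear_combination -hd)⟩)
    · have hp1 : π i = 1 := (zmod2_cases (π i)).resolve_left hp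
      have h1 : π (i + d) = 0 := by rw [map_add, hπd, hp1, h11]
      rw [whSigmaFun_1o hp, whSigmaFun_2e h1]
      exact Or.inl (Or.inr (Or.inr (Or.inr ⟨rfl, rfl, Or.inl
        (by linear_combination h2c - hd)⟩)))

end Sigma

end Aux

theorem WH_vertex_transitive_family_one (n : ℕ) (hn : 4 ≤ n) (hneven : Even n) (a b c d : ZMod n)
    (hbc : b ≠ c) (hbd : b ≠ d) (hcd : c ≠ d)
    (haodd : Odd a) (hbodd : Odd b) (hdodd : Odd d) (hceven : Even c)
    (hd : d = 2 * a + b) (h2c : 2 * c = 3 * a + 3 * b) :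
    ∀ u v : Fin 3 × ZMod n,
      ∃ φ : WH n a b c d ≃g WH n a b c d, φ u = v := by
  classical
  have hn2 : 2 ∣ n := hneven.two_dvd
  have h2 : (2 : ZMod 2) = 0 := by decide
  have hπodd : ∀ x : ZMod n, Odd x → ZMod.castHom hn2 (ZMod 2) x = 1 := by
    rintro x ⟨k, hk⟩
    have h : ZMod.castHom hn2 (ZMod 2) x =
        2 * ZMod.castHom hn2 (ZMod 2) k + 1 := by
      rw [hk, map_add, map_mul, map_one, map_ofNat]
    rw [h, h2]; ring
  have hπeven : ∀ x : ZMod n, Even x → ZMod.castHom hn2 (ZMod 2) x = 0 := by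
    rintro x ⟨k, hk⟩
    have h : ZMod.castHom hn2 (ZMod 2) x =
        ZMod.castHom hn2 (ZMod 2) k + ZMod.castHom hn2 (ZMod 2) k := by
      rw [hk, map_add]
    rw [h, ← two_mul, h2, zero_mul]
  have hπa := hπodd a haodd
  have hπb := hπodd b hbodd
  have hπd := hπodd d hdodd
  have hπc := hπeven c hceven
  let σIso : WH n a b c d ≃g WH n a b c d :=
    whIsoOfInvolutive (whSigmaFun n hn2 a b c)
      (whSigmaFun_involutive hπa hπb hπc)
      (whSigmaFun_rel hπa hπb hπc hπd hd h2c)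
  let τIso : WH n a b c d ≃g WH n a b c d :=
    whIsoOfInvolutive (whTauFun n) whTauFun_involutive whTauFun_rel
  have hσ00 : σIso ((0 : Fin 3), (0 : ZMod n)) = ((1 : Fin 3), (0 : ZMod n)) := by
    show whSigmaFun n hn2 a b c (0, 0) = (1, 0)
    rw [whSigmaFun_0e (by rw [map_zero]), neg_zero]
  have hτ10 : τIso ((1 : Fin 3), (0 : ZMod n)) = ((2 : Fin 3), (0 : ZMod n)) := by
    show whTauFun n (1, 0) = (2, 0)
    rw [whTauFun_one, neg_zero]
  have hshift : ∀ (t : Fin 3) (i s : ZMod n),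
      whShiftIso n a b c d s (t, i) = (t, i + s) := fun _ _ _ => rfl
  have base : ∀ w : Fin 3 × ZMod n,
      ∃ φ : WH n a b c d ≃g WH n a b c d, φ ((0 : Fin 3), (0 : ZMod n)) = w := by
    rintro ⟨t, i⟩
    rcases fin3_cases t with rfl | rfl | rfl
    · exact ⟨whShiftIso n a b c d i, by rw [hshift, zero_add]⟩
    · refine ⟨σIso.trans (whShiftIso n a b c d i), ?_⟩
      have h : (σIso.trans (whShiftIso n a b c d i)) ((0 : Fin 3), (0 : ZMod n)) =
          whShiftIso n a b c d i (σIso ((0 : Fin 3), (0 : ZMod n))) := rfl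
      rw [h, hσ00, hshift, zero_add]
    · refine ⟨(σIso.trans τIso).trans (whShiftIso n a b c d i), ?_⟩
      have h : ((σIso.trans τIso).trans (whShiftIso n a b c d i))
          ((0 : Fin 3), (0 : ZMod n)) =
          whShiftIso n a b c d i (τIso (σIso ((0 : Fin 3), (0 : ZMod n)))) := rfl
      rw [h, hσ00, hτ10, hshift, zero_add]
  intro u v
  obtain ⟨φu, hφu⟩ := base u
  obtain ⟨φv, hφv⟩ := base v
  refine ⟨φu.symm.trans φv, ?_⟩
  have h0 : φu.symm u = ((0 : Fin 3), (0 : ZMod n)) := by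
    rw [← hφu]; exact φu.symm_apply_apply _
  have h : (φu.symm.trans φv) u = φv (φu.symm u) := rfl
  rw [h, h0, hφv]
end

section
/- For every odd integer m ≥ 3, the Woolly Hat graph WH_{4m}(2, m−2, 0, m+2) is vertex-transitive. -/
namespace WHAux

/-- The Woolly Hat graph of the theorem. -/
abbrev Gg (m : ℕ) : SimpleGraph (Fin 3 × ZMod (4 * m)) :=
  WH (4 * m) 2 ((m : ZMod (4 * m)) - 2) 0 ((m : ZMod (4 * m)) + 2)

lemma WH_adj {n : ℕ} {a b c d : ZMod n} {u v : Fin 3 × ZMod n} :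
    (WH n a b c d).Adj u v ↔ (u ≠ v ∧ (WHRel n a b c d u v ∨ WHRel n a b c d v u)) :=
  Iff.rfl

variable (m : ℕ)

lemma R_iff (t t' : Fin 3) (i j : ZMod (4 * m)) :
    WHRel (4 * m) 2 ((m : ZMod (4 * m)) - 2) 0 ((m : ZMod (4 * m)) + 2) (t, i) (t', j) ↔
      ((t = 0 ∧ t' = 0 ∧ (j = i + 2 ∨ j = i - 2)) ∨
       (t = 0 ∧ t' = 1 ∧ j = i) ∨
       (t = 0 ∧ t' = 2 ∧ j = i) ∨
       (t = 1 ∧ t' = 2 ∧ (j = i + ((m : ZMod (4 * m)) - 2) ∨ j = i + 0 ∨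
          j = i + ((m : ZMod (4 * m)) + 2)))) :=
  Iff.rfl

/-- residue class map: `i ↦ m * (i mod 4)`. -/
def qm (i : ZMod (4 * m)) : ZMod 4 :=
  (m : ZMod 4) * (ZMod.castHom (dvd_mul_right 4 m) (ZMod 4) i)

def eps (x : ZMod 4) : ZMod (4 * m) :=
  if x = 2 then (m : ZMod (4 * m)) else if x = 3 then -(m : ZMod (4 * m)) else 0

def Ftab (x : ZMod 4) (t : Fin 3) : Fin 3 :=
  if x = 0 then (if t = 0 then 1 else if t = 1 then 0 else 2)
  else if x = 1 then (if t = 0 then 2 else if t = 1 then 1 else 0)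
  else if x = 2 then (if t = 0 then 2 else if t = 1 then 0 else 1)
  else (if t = 0 then 1 else if t = 1 then 2 else 0)

def phi (u : Fin 3 × ZMod (4 * m)) : Fin 3 × ZMod (4 * m) :=
  (Ftab (qm m u.2) u.1, u.2 + eps m (qm m u.2))

lemma four : ∀ x : ZMod 4, x = 0 ∨ x = 1 ∨ x = 2 ∨ x = 3 := by decide

lemma z02 : (0 : ZMod 4) + 2 = 2 := by decide
lemma z12 : (1 : ZMod 4) + 2 = 3 := by decide
lemma z22 : (2 : ZMod 4) + 2 = 0 := by decide
lemma z32 : (3 : ZMod 4) + 2 = 1 := by decide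
lemma z03 : (0 : ZMod 4) + 3 = 3 := by decide
lemma z13 : (1 : ZMod 4) + 3 = 0 := by decide
lemma z23 : (2 : ZMod 4) + 3 = 1 := by decide
lemma z33 : (3 : ZMod 4) + 3 = 2 := by decide
lemma z21 : (2 : ZMod 4) + 1 = 3 := by decide

lemma F00 : Ftab 0 0 = 1 := by decide
lemma F01 : Ftab 0 1 = 0 := by decide
lemma F02 : Ftab 0 2 = 2 := by decide
lemma F10 : Ftab 1 0 = 2 := by decide
lemma F11 : Ftab 1 1 = 1 := by decide
lemma F12 : Ftab 1 2 = 0 := by decide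
lemma F20 : Ftab 2 0 = 2 := by decide
lemma F21 : Ftab 2 1 = 0 := by decide
lemma F22 : Ftab 2 2 = 1 := by decide
lemma F30 : Ftab 3 0 = 1 := by decide
lemma F31 : Ftab 3 1 = 2 := by decide
lemma F32 : Ftab 3 2 = 0 := by decide

lemma eps_zero : eps m 0 = 0 := by
  unfold eps; rw [if_neg (by decide), if_neg (by decide)]
lemma eps_one : eps m 1 = 0 := by
  unfold eps; rw [if_neg (by decide), if_neg (by decide)]
lemma eps_two : eps m 2 = (m : ZMod (4 * m)) := by
  unfold eps; rw [if_pos rfl]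
lemma eps_three : eps m 3 = -(m : ZMod (4 * m)) := by
  unfold eps; rw [if_neg (by decide), if_pos rfl]

lemma h4M : 4 * (m : ZMod (4 * m)) = 0 := by
  have h := ZMod.natCast_self (4 * m)
  push_cast at h
  exact h

lemma q_add (i j : ZMod (4 * m)) : qm m (i + j) = qm m i + qm m j := by
  simp [qm, map_add, mul_add]

lemma q_neg (i : ZMod (4 * m)) : qm m (-i) = -qm m i := by
  rw [qm, qm, map_neg, mul_neg]

lemma q2 (hm : Odd m) : qm m (2 : ZMod (4 * m)) = 2 := by
  obtain ⟨k, hk⟩ := hm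
  have h4 : (4 : ZMod 4) = 0 := by decide
  have hc : (ZMod.castHom (dvd_mul_right 4 m) (ZMod 4)) (2 : ZMod (4 * m)) = 2 :=
    map_ofNat _ 2
  rw [qm, hc, hk]
  push_cast
  linear_combination (k : ZMod 4) * h4

lemma qM (hm : Odd m) : qm m ((m : ZMod (4 * m))) = 1 := by
  obtain ⟨k, hk⟩ := hm
  have h4 : (4 : ZMod 4) = 0 := by decide
  rw [qm, map_natCast, hk]
  push_cast
  linear_combination (k * k + k : ZMod 4) * h4

lemma q_add2 (hm : Odd m) (i : ZMod (4 * m)) : qm m (i + 2) = qm m i + 2 := by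
  rw [q_add, q2 m hm]

lemma q_sub2 (hm : Odd m) (i : ZMod (4 * m)) : qm m (i - 2) = qm m i + 2 := by
  rw [sub_eq_add_neg, q_add, q_neg, q2 m hm, show -(2 : ZMod 4) = 2 by decide]

lemma q_bval (hm : Odd m) : qm m ((m : ZMod (4 * m)) - 2) = 3 := by
  rw [sub_eq_add_neg, q_add, q_neg, qM m hm, q2 m hm]; decide

lemma q_dval (hm : Odd m) : qm m ((m : ZMod (4 * m)) + 2) = 3 := by
  rw [q_add, qM m hm, q2 m hm]; decide

lemma q_b (hm : Odd m) (i : ZMod (4 * m)) :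
    qm m (i + ((m : ZMod (4 * m)) - 2)) = qm m i + 3 := by
  rw [q_add, q_bval m hm]

lemma q_d (hm : Odd m) (i : ZMod (4 * m)) :
    qm m (i + ((m : ZMod (4 * m)) + 2)) = qm m i + 3 := by
  rw [q_add, q_dval m hm]

lemma q_aM (hm : Odd m) (i : ZMod (4 * m)) :
    qm m (i + (m : ZMod (4 * m))) = qm m i + 1 := by
  rw [q_add, qM m hm]

lemma q_sM (hm : Odd m) (i : ZMod (4 * m)) :
    qm m (i + -(m : ZMod (4 * m))) = qm m i + 3 := by
  rw [q_add, q_neg, qM m hm, show -(1 : ZMod 4) = 3 by decide]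

lemma phi_phi (hm : Odd m) : ∀ u, phi m (phi m u) = u := by
  rintro ⟨t, i⟩
  rcases four (qm m i) with hq | hq | hq | hq
  · simp only [phi, hq, eps_zero, add_zero]
    rw [Prod.mk.injEq]
    exact ⟨by revert t; decide, rfl⟩
  · simp only [phi, hq, eps_one, add_zero]
    rw [Prod.mk.injEq]
    exact ⟨by revert t; decide, rfl⟩
  · simp only [phi, hq, eps_two, q_aM m hm, z21, eps_three]
    rw [Prod.mk.injEq]
    exact ⟨by revert t; decide, by ring⟩
  · simp only [phi, hq, eps_three, q_sM m hm, z33, eps_two]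
    rw [Prod.mk.injEq]
    exact ⟨by revert t; decide, by ring⟩

lemma phi_rel (hm : Odd m) (t s : Fin 3) (i j : ZMod (4 * m))
    (h : WHRel (4 * m) 2 ((m : ZMod (4 * m)) - 2) 0 ((m : ZMod (4 * m)) + 2) (t, i) (s, j)) :
    WHRel (4 * m) 2 ((m : ZMod (4 * m)) - 2) 0 ((m : ZMod (4 * m)) + 2)
      (phi m (t, i)) (phi m (s, j)) ∨
    WHRel (4 * m) 2 ((m : ZMod (4 * m)) - 2) 0 ((m : ZMod (4 * m)) + 2)
      (phi m (s, j)) (phi m (t, i)) := by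
  have h4 := h4M m
  rw [R_iff] at h
  obtain ⟨rfl, rfl, hj | hj⟩ | ⟨rfl, rfl, hj⟩ | ⟨rfl, rfl, hj⟩ | ⟨rfl, rfl, hj | hj | hj⟩ := h <;>
    subst hj
  · rcases four (qm m i) with hq | hq | hq | hq
    · simp only [phi, q_add2 m hm, q_sub2 m hm, q_b m hm, q_d m hm, add_zero, hq,
        z02, z12, z22, z32, z03, z13, z23, z33, eps_zero, eps_one, eps_two, eps_three,
        F00, F01, F02, F10, F11, F12, F20, F21, F22, F30, F31, F32, R_iff]
      exact Or.inl (Or.inr (Or.inr (Or.inr ⟨by trivial, by trivial, Or.inr (Or.inr (by ring))⟩)))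
    · simp only [phi, q_add2 m hm, q_sub2 m hm, q_b m hm, q_d m hm, add_zero, hq,
        z02, z12, z22, z32, z03, z13, z23, z33, eps_zero, eps_one, eps_two, eps_three,
        F00, F01, F02, F10, F11, F12, F20, F21, F22, F30, F31, F32, R_iff]
      exact Or.inr (Or.inr (Or.inr (Or.inr ⟨by trivial, by trivial, Or.inl (by ring)⟩)))
    · simp only [phi, q_add2 m hm, q_sub2 m hm, q_b m hm, q_d m hm, add_zero, hq,
        z02, z12, z22, z32, z03, z13, z23, z33, eps_zero, eps_one, eps_two, eps_three,
        F00, F01, F02, F10, F11, F12, F20, F21, F22, F30, F31, F32, R_iff]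
      exact Or.inr (Or.inr (Or.inr (Or.inr ⟨by trivial, by trivial, Or.inl (by ring)⟩)))
    · simp only [phi, q_add2 m hm, q_sub2 m hm, q_b m hm, q_d m hm, add_zero, hq,
        z02, z12, z22, z32, z03, z13, z23, z33, eps_zero, eps_one, eps_two, eps_three,
        F00, F01, F02, F10, F11, F12, F20, F21, F22, F30, F31, F32, R_iff]
      exact Or.inl (Or.inr (Or.inr (Or.inr ⟨by trivial, by trivial, Or.inr (Or.inr (by ring))⟩)))
  · rcases four (qm m i) with hq | hq | hq | hq
    · simp only [phi, q_add2 m hm, q_sub2 m hm, q_b m hm, q_d m hm, add_zero, hq,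
        z02, z12, z22, z32, z03, z13, z23, z33, eps_zero, eps_one, eps_two, eps_three,
        F00, F01, F02, F10, F11, F12, F20, F21, F22, F30, F31, F32, R_iff]
      exact Or.inl (Or.inr (Or.inr (Or.inr ⟨by trivial, by trivial, Or.inl (by ring)⟩)))
    · simp only [phi, q_add2 m hm, q_sub2 m hm, q_b m hm, q_d m hm, add_zero, hq,
        z02, z12, z22, z32, z03, z13, z23, z33, eps_zero, eps_one, eps_two, eps_three,
        F00, F01, F02, F10, F11, F12, F20, F21, F22, F30, F31, F32, R_iff]
      exact Or.inr (Or.inr (Or.inr (Or.inr ⟨by trivial, by trivial, Or.inr (Or.inr (by ring))⟩)))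
    · simp only [phi, q_add2 m hm, q_sub2 m hm, q_b m hm, q_d m hm, add_zero, hq,
        z02, z12, z22, z32, z03, z13, z23, z33, eps_zero, eps_one, eps_two, eps_three,
        F00, F01, F02, F10, F11, F12, F20, F21, F22, F30, F31, F32, R_iff]
      exact Or.inr (Or.inr (Or.inr (Or.inr ⟨by trivial, by trivial, Or.inr (Or.inr (by ring))⟩)))
    · simp only [phi, q_add2 m hm, q_sub2 m hm, q_b m hm, q_d m hm, add_zero, hq,
        z02, z12, z22, z32, z03, z13, z23, z33, eps_zero, eps_one, eps_two, eps_three,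
        F00, F01, F02, F10, F11, F12, F20, F21, F22, F30, F31, F32, R_iff]
      exact Or.inl (Or.inr (Or.inr (Or.inr ⟨by trivial, by trivial, Or.inl (by ring)⟩)))
  · rcases four (qm m j) with hq | hq | hq | hq
    · simp only [phi, q_add2 m hm, q_sub2 m hm, q_b m hm, q_d m hm, add_zero, hq,
        z02, z12, z22, z32, z03, z13, z23, z33, eps_zero, eps_one, eps_two, eps_three,
        F00, F01, F02, F10, F11, F12, F20, F21, F22, F30, F31, F32, R_iff]
      exact Or.inr (Or.inr (Or.inl ⟨by trivial, by trivial, by trivial⟩))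
    · simp only [phi, q_add2 m hm, q_sub2 m hm, q_b m hm, q_d m hm, add_zero, hq,
        z02, z12, z22, z32, z03, z13, z23, z33, eps_zero, eps_one, eps_two, eps_three,
        F00, F01, F02, F10, F11, F12, F20, F21, F22, F30, F31, F32, R_iff]
      exact Or.inr (Or.inr (Or.inr (Or.inr ⟨by trivial, by trivial, Or.inr (Or.inl (by trivial))⟩)))
    · simp only [phi, q_add2 m hm, q_sub2 m hm, q_b m hm, q_d m hm, add_zero, hq,
        z02, z12, z22, z32, z03, z13, z23, z33, eps_zero, eps_one, eps_two, eps_three,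
        F00, F01, F02, F10, F11, F12, F20, F21, F22, F30, F31, F32, R_iff]
      exact Or.inr (Or.inr (Or.inr (Or.inl ⟨by trivial, by trivial, by trivial⟩)))
    · simp only [phi, q_add2 m hm, q_sub2 m hm, q_b m hm, q_d m hm, add_zero, hq,
        z02, z12, z22, z32, z03, z13, z23, z33, eps_zero, eps_one, eps_two, eps_three,
        F00, F01, F02, F10, F11, F12, F20, F21, F22, F30, F31, F32, R_iff]
      exact Or.inl (Or.inr (Or.inr (Or.inr ⟨by trivial, by trivial, Or.inr (Or.inl (by trivial))⟩)))
  · rcases four (qm m j) with hq | hq | hq | hq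
    · simp only [phi, q_add2 m hm, q_sub2 m hm, q_b m hm, q_d m hm, add_zero, hq,
        z02, z12, z22, z32, z03, z13, z23, z33, eps_zero, eps_one, eps_two, eps_three,
        F00, F01, F02, F10, F11, F12, F20, F21, F22, F30, F31, F32, R_iff]
      exact Or.inl (Or.inr (Or.inr (Or.inr ⟨by trivial, by trivial, Or.inr (Or.inl (by trivial))⟩)))
    · simp only [phi, q_add2 m hm, q_sub2 m hm, q_b m hm, q_d m hm, add_zero, hq,
        z02, z12, z22, z32, z03, z13, z23, z33, eps_zero, eps_one, eps_two, eps_three,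
        F00, F01, F02, F10, F11, F12, F20, F21, F22, F30, F31, F32, R_iff]
      exact Or.inr (Or.inr (Or.inr (Or.inl ⟨by trivial, by trivial, by trivial⟩)))
    · simp only [phi, q_add2 m hm, q_sub2 m hm, q_b m hm, q_d m hm, add_zero, hq,
        z02, z12, z22, z32, z03, z13, z23, z33, eps_zero, eps_one, eps_two, eps_three,
        F00, F01, F02, F10, F11, F12, F20, F21, F22, F30, F31, F32, R_iff]
      exact Or.inr (Or.inr (Or.inr (Or.inr ⟨by trivial, by trivial, Or.inr (Or.inl (by trivial))⟩)))
    · simp only [phi, q_add2 m hm, q_sub2 m hm, q_b m hm, q_d m hm, add_zero, hq,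
        z02, z12, z22, z32, z03, z13, z23, z33, eps_zero, eps_one, eps_two, eps_three,
        F00, F01, F02, F10, F11, F12, F20, F21, F22, F30, F31, F32, R_iff]
      exact Or.inr (Or.inr (Or.inl ⟨by trivial, by trivial, by trivial⟩))
  · rcases four (qm m i) with hq | hq | hq | hq
    · simp only [phi, q_add2 m hm, q_sub2 m hm, q_b m hm, q_d m hm, add_zero, hq,
        z02, z12, z22, z32, z03, z13, z23, z33, eps_zero, eps_one, eps_two, eps_three,
        F00, F01, F02, F10, F11, F12, F20, F21, F22, F30, F31, F32, R_iff]
      exact Or.inl (Or.inl ⟨by trivial, by trivial, Or.inr (by ring)⟩)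
    · simp only [phi, q_add2 m hm, q_sub2 m hm, q_b m hm, q_d m hm, add_zero, hq,
        z02, z12, z22, z32, z03, z13, z23, z33, eps_zero, eps_one, eps_two, eps_three,
        F00, F01, F02, F10, F11, F12, F20, F21, F22, F30, F31, F32, R_iff]
      exact Or.inl (Or.inr (Or.inr (Or.inr ⟨by trivial, by trivial, Or.inl (by trivial)⟩)))
    · simp only [phi, q_add2 m hm, q_sub2 m hm, q_b m hm, q_d m hm, add_zero, hq,
        z02, z12, z22, z32, z03, z13, z23, z33, eps_zero, eps_one, eps_two, eps_three,
        F00, F01, F02, F10, F11, F12, F20, F21, F22, F30, F31, F32, R_iff]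
      exact Or.inl (Or.inl ⟨by trivial, by trivial, Or.inr (by ring)⟩)
    · simp only [phi, q_add2 m hm, q_sub2 m hm, q_b m hm, q_d m hm, add_zero, hq,
        z02, z12, z22, z32, z03, z13, z23, z33, eps_zero, eps_one, eps_two, eps_three,
        F00, F01, F02, F10, F11, F12, F20, F21, F22, F30, F31, F32, R_iff]
      exact Or.inr (Or.inr (Or.inr (Or.inr ⟨by trivial, by trivial, Or.inr (Or.inr (by linear_combination (-1 : ZMod (4*m)) * h4))⟩)))
  · rcases four (qm m i) with hq | hq | hq | hq
    · simp only [phi, q_add2 m hm, q_sub2 m hm, q_b m hm, q_d m hm, add_zero, hq,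
        z02, z12, z22, z32, z03, z13, z23, z33, eps_zero, eps_one, eps_two, eps_three,
        F00, F01, F02, F10, F11, F12, F20, F21, F22, F30, F31, F32, R_iff]
      exact Or.inl (Or.inr (Or.inr (Or.inl ⟨by trivial, by trivial, by trivial⟩)))
    · simp only [phi, q_add2 m hm, q_sub2 m hm, q_b m hm, q_d m hm, add_zero, hq,
        z02, z12, z22, z32, z03, z13, z23, z33, eps_zero, eps_one, eps_two, eps_three,
        F00, F01, F02, F10, F11, F12, F20, F21, F22, F30, F31, F32, R_iff]
      exact Or.inr (Or.inr (Or.inl ⟨by trivial, by trivial, by trivial⟩))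
    · simp only [phi, q_add2 m hm, q_sub2 m hm, q_b m hm, q_d m hm, add_zero, hq,
        z02, z12, z22, z32, z03, z13, z23, z33, eps_zero, eps_one, eps_two, eps_three,
        F00, F01, F02, F10, F11, F12, F20, F21, F22, F30, F31, F32, R_iff]
      exact Or.inl (Or.inr (Or.inl ⟨by trivial, by trivial, by trivial⟩))
    · simp only [phi, q_add2 m hm, q_sub2 m hm, q_b m hm, q_d m hm, add_zero, hq,
        z02, z12, z22, z32, z03, z13, z23, z33, eps_zero, eps_one, eps_two, eps_three,
        F00, F01, F02, F10, F11, F12, F20, F21, F22, F30, F31, F32, R_iff]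
      exact Or.inr (Or.inr (Or.inr (Or.inl ⟨by trivial, by trivial, by trivial⟩)))
  · rcases four (qm m i) with hq | hq | hq | hq
    · simp only [phi, q_add2 m hm, q_sub2 m hm, q_b m hm, q_d m hm, add_zero, hq,
        z02, z12, z22, z32, z03, z13, z23, z33, eps_zero, eps_one, eps_two, eps_three,
        F00, F01, F02, F10, F11, F12, F20, F21, F22, F30, F31, F32, R_iff]
      exact Or.inl (Or.inl ⟨by trivial, by trivial, Or.inl (by ring)⟩)
    · simp only [phi, q_add2 m hm, q_sub2 m hm, q_b m hm, q_d m hm, add_zero, hq,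
        z02, z12, z22, z32, z03, z13, z23, z33, eps_zero, eps_one, eps_two, eps_three,
        F00, F01, F02, F10, F11, F12, F20, F21, F22, F30, F31, F32, R_iff]
      exact Or.inl (Or.inr (Or.inr (Or.inr ⟨by trivial, by trivial, Or.inr (Or.inr (by trivial))⟩)))
    · simp only [phi, q_add2 m hm, q_sub2 m hm, q_b m hm, q_d m hm, add_zero, hq,
        z02, z12, z22, z32, z03, z13, z23, z33, eps_zero, eps_one, eps_two, eps_three,
        F00, F01, F02, F10, F11, F12, F20, F21, F22, F30, F31, F32, R_iff]
      exact Or.inl (Or.inl ⟨by trivial, by trivial, Or.inl (by ring)⟩)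
    · simp only [phi, q_add2 m hm, q_sub2 m hm, q_b m hm, q_d m hm, add_zero, hq,
        z02, z12, z22, z32, z03, z13, z23, z33, eps_zero, eps_one, eps_two, eps_three,
        F00, F01, F02, F10, F11, F12, F20, F21, F22, F30, F31, F32, R_iff]
      exact Or.inr (Or.inr (Or.inr (Or.inr ⟨by trivial, by trivial, Or.inl (by linear_combination (-1 : ZMod (4*m)) * h4)⟩)))

def swt (t : Fin 3) : Fin 3 := if t = 0 then 0 else if t = 1 then 2 else 1

def sw (u : Fin 3 × ZMod (4 * m)) : Fin 3 × ZMod (4 * m) := (swt u.1, -u.2)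

lemma sw_sw : ∀ u, sw m (sw m u) = u := by
  rintro ⟨t, i⟩
  simp only [sw]
  rw [Prod.mk.injEq]
  exact ⟨by revert t; decide, neg_neg i⟩

lemma sw0 : swt 0 = 0 := by decide
lemma sw1 : swt 1 = 2 := by decide
lemma sw2 : swt 2 = 1 := by decide

lemma sw_rel (t s : Fin 3) (i j : ZMod (4 * m))
    (h : WHRel (4 * m) 2 ((m : ZMod (4 * m)) - 2) 0 ((m : ZMod (4 * m)) + 2) (t, i) (s, j)) :
    WHRel (4 * m) 2 ((m : ZMod (4 * m)) - 2) 0 ((m : ZMod (4 * m)) + 2)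
      (sw m (t, i)) (sw m (s, j)) ∨
    WHRel (4 * m) 2 ((m : ZMod (4 * m)) - 2) 0 ((m : ZMod (4 * m)) + 2)
      (sw m (s, j)) (sw m (t, i)) := by
  rw [R_iff] at h
  obtain ⟨rfl, rfl, hj | hj⟩ | ⟨rfl, rfl, hj⟩ | ⟨rfl, rfl, hj⟩ | ⟨rfl, rfl, hj | hj | hj⟩ := h <;>
    subst hj <;> simp only [sw, sw0, sw1, sw2, R_iff]
  · exact Or.inl (Or.inl ⟨by trivial, by trivial, Or.inr (by ring)⟩)
  · exact Or.inl (Or.inl ⟨by trivial, by trivial, Or.inl (by ring)⟩)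
  · exact Or.inl (Or.inr (Or.inr (Or.inl ⟨by trivial, by trivial, by trivial⟩)))
  · exact Or.inl (Or.inr (Or.inl ⟨by trivial, by trivial, by trivial⟩))
  · exact Or.inr (Or.inr (Or.inr (Or.inr ⟨by trivial, by trivial, Or.inl (by ring)⟩)))
  · exact Or.inr (Or.inr (Or.inr (Or.inr ⟨by trivial, by trivial, Or.inr (Or.inl (by ring))⟩)))
  · exact Or.inr (Or.inr (Or.inr (Or.inr ⟨by trivial, by trivial, Or.inr (Or.inr (by ring))⟩)))

lemma tr_rel (c : ZMod (4 * m)) (t s : Fin 3) (i j : ZMod (4 * m))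
    (h : WHRel (4 * m) 2 ((m : ZMod (4 * m)) - 2) 0 ((m : ZMod (4 * m)) + 2) (t, i) (s, j)) :
    WHRel (4 * m) 2 ((m : ZMod (4 * m)) - 2) 0 ((m : ZMod (4 * m)) + 2)
      (t, i + c) (s, j + c) := by
  rw [R_iff] at h
  rw [R_iff]
  obtain ⟨h1, h2, hj | hj⟩ | ⟨h1, h2, hj⟩ | ⟨h1, h2, hj⟩ | ⟨h1, h2, hj | hj | hj⟩ := h <;>
    subst hj
  · exact Or.inl ⟨h1, h2, Or.inl (by ring)⟩
  · exact Or.inl ⟨h1, h2, Or.inr (by ring)⟩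
  · exact Or.inr (Or.inl ⟨h1, h2, rfl⟩)
  · exact Or.inr (Or.inr (Or.inl ⟨h1, h2, rfl⟩))
  · exact Or.inr (Or.inr (Or.inr ⟨h1, h2, Or.inl (by ring)⟩))
  · exact Or.inr (Or.inr (Or.inr ⟨h1, h2, Or.inr (Or.inl (by ring))⟩))
  · exact Or.inr (Or.inr (Or.inr ⟨h1, h2, Or.inr (Or.inr (by ring))⟩))

/-- Build an automorphism from an adjacency-preserving involution. -/
def isoOfInv (f : Fin 3 × ZMod (4 * m) → Fin 3 × ZMod (4 * m))
    (hinv : ∀ u, f (f u) = u)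
    (hrel : ∀ u v, WHRel (4 * m) 2 ((m : ZMod (4 * m)) - 2) 0 ((m : ZMod (4 * m)) + 2) u v →
      WHRel (4 * m) 2 ((m : ZMod (4 * m)) - 2) 0 ((m : ZMod (4 * m)) + 2) (f u) (f v) ∨
      WHRel (4 * m) 2 ((m : ZMod (4 * m)) - 2) 0 ((m : ZMod (4 * m)) + 2) (f v) (f u)) :
    Gg m ≃g Gg m where
  toFun := f
  invFun := f
  left_inv := hinv
  right_inv := hinv
  map_rel_iff' := by
    intro u v
    have hs : ∀ u v : Fin 3 × ZMod (4 * m), (Gg m).Adj u v → (Gg m).Adj (f u) (f v) := by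
      rintro u v huv
      rw [WH_adj] at huv
      obtain ⟨hne, h | h⟩ := huv
      · exact WH_adj.mpr ⟨fun he => hne (by rw [← hinv u, ← hinv v, he]), hrel u v h⟩
      · exact WH_adj.mpr ⟨fun he => hne (by rw [← hinv u, ← hinv v, he]), (hrel v u h).symm⟩
    constructor
    · intro h
      have h2 := hs _ _ h
      simpa only [Equiv.coe_fn_mk, hinv] using h2
    · exact hs u v

def phiIso (hm : Odd m) : Gg m ≃g Gg m :=
  isoOfInv m (phi m) (phi_phi m hm)
    (fun u v h => by
      obtain ⟨t, i⟩ := u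
      obtain ⟨s, j⟩ := v
      exact phi_rel m hm t s i j h)

def swIso : Gg m ≃g Gg m :=
  isoOfInv m (sw m) (sw_sw m)
    (fun u v h => by
      obtain ⟨t, i⟩ := u
      obtain ⟨s, j⟩ := v
      exact sw_rel m t s i j h)

def trIso (c : ZMod (4 * m)) : Gg m ≃g Gg m where
  toEquiv := (Equiv.refl (Fin 3)).prodCongr (Equiv.addRight c)
  map_rel_iff' := by
    have hA : ∀ (c : ZMod (4 * m)) (t s : Fin 3) (i j : ZMod (4 * m)),
        (Gg m).Adj (t, i) (s, j) → (Gg m).Adj (t, i + c) (s, j + c) := by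
      rintro c t s i j ⟨hne, h | h⟩
      · refine ⟨?_, Or.inl (tr_rel m c t s i j h)⟩
        intro he
        apply hne
        have h1 : t = s := congrArg Prod.fst he
        have h2 : i + c = j + c := congrArg Prod.snd he
        rw [Prod.mk.injEq]
        exact ⟨h1, add_right_cancel h2⟩
      · refine ⟨?_, Or.inr (tr_rel m c s t j i h)⟩
        intro he
        apply hne
        have h1 : t = s := congrArg Prod.fst he
        have h2 : i + c = j + c := congrArg Prod.snd he
        rw [Prod.mk.injEq]
        exact ⟨h1, add_right_cancel h2⟩
    rintro ⟨t, i⟩ ⟨s, j⟩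
    constructor
    · intro h
      have h2 : (Gg m).Adj (t, i + c) (s, j + c) := h
      have h3 := hA (-c) t s (i + c) (j + c) h2
      simpa only [add_neg_cancel_right] using h3
    · intro h
      exact hA c t s i j h

lemma qm_zero : qm m 0 = 0 := by simp [qm]

lemma phi_zero (hm : Odd m) : phi m ((0 : Fin 3), (0 : ZMod (4 * m))) = (1, 0) := by
  simp only [phi, qm_zero, eps_zero, add_zero, F00]

lemma exists_iso_zero (hm : Odd m) (w : Fin 3 × ZMod (4 * m)) :
    ∃ φ : Gg m ≃g Gg m, φ ((0 : Fin 3), (0 : ZMod (4 * m))) = w := by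
  obtain ⟨t, j⟩ := w
  fin_cases t
  · exact ⟨trIso m j, by show ((0 : Fin 3), (0 : ZMod (4 * m)) + j) = _; rw [zero_add]; rfl⟩
  · refine ⟨(phiIso m hm).trans (trIso m j), ?_⟩
    show ((trIso m j) ((phiIso m hm) ((0 : Fin 3), (0 : ZMod (4 * m))))) = _
    have h1 : (phiIso m hm) ((0 : Fin 3), (0 : ZMod (4 * m))) = (1, 0) := phi_zero m hm
    rw [h1]
    show ((1 : Fin 3), (0 : ZMod (4 * m)) + j) = _
    rw [zero_add]
    rfl
  · refine ⟨((phiIso m hm).trans (swIso m)).trans (trIso m j), ?_⟩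
    show ((trIso m j) ((swIso m) ((phiIso m hm) ((0 : Fin 3), (0 : ZMod (4 * m)))))) = _
    have h1 : (phiIso m hm) ((0 : Fin 3), (0 : ZMod (4 * m))) = (1, 0) := phi_zero m hm
    rw [h1]
    have h2 : (swIso m) ((1 : Fin 3), (0 : ZMod (4 * m))) = (2, 0) := by
      show (swt 1, -(0 : ZMod (4 * m))) = _
      rw [sw1, neg_zero]
    rw [h2]
    show ((2 : Fin 3), (0 : ZMod (4 * m)) + j) = _
    rw [zero_add]
    rfl

end WHAux

theorem WH_vertex_transitive_family_two (m : ℕ) (hm : Odd m) (hm3 : 3 ≤ m) :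
    ∀ u v : Fin 3 × ZMod (4 * m),
      ∃ φ : WH (4 * m) 2 ((m : ZMod (4 * m)) - 2) 0 ((m : ZMod (4 * m)) + 2) ≃g
            WH (4 * m) 2 ((m : ZMod (4 * m)) - 2) 0 ((m : ZMod (4 * m)) + 2),
        φ u = v := by
  intro u v
  obtain ⟨φu, hu⟩ := WHAux.exists_iso_zero m hm u
  obtain ⟨φv, hv⟩ := WHAux.exists_iso_zero m hm v
  refine ⟨φu.symm.trans φv, ?_⟩
  have h0 : φu.symm u = ((0 : Fin 3), (0 : ZMod (4 * m))) := by
    rw [← hu]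
    exact φu.symm_apply_apply _
  show φv (φu.symm u) = v
  rw [h0, hv]
end

section
/- No graph from item (2) of the vertex-transitivity classification is isomorphic to a graph from item (3): if n = 4m with m odd, a, b, d odd, c even, d = 2a+b, 2c = 3a+3b, then WH_n(a,b,c,d) is not isomorphic to WH_{4m}(2, m−2, 0, m+2). (Key reason: every cycle of WH_n(a,b,c,d) consisting only of a-, b- and d-edges through A-vertices has length divisible by 4, whereas the corresponding 'red' cycles of WH_{4m}(2,m−2,0,m+2) have length 2m, which is not divisible by 4; equivalently, WH_{4m}(2,m−2,0,m+2) contains 3-cycles through every vertex while the blue cycles of the other graph force a different cycle structure.) -/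
set_option maxHeartbeats 4000000 in
lemma tri {n : ℕ} {a b c d : ZMod n} (ha : a ≠ 0) (h3a : a + a + a ≠ 0)
    (hb : b ≠ 0) (hd : d ≠ 0) :
    ∀ {u v w : Fin 3 × ZMod n}, (WH n a b c d).Adj u v → (WH n a b c d).Adj v w →
      (WH n a b c d).Adj u w → u.2 = v.2 ∧ u.2 = w.2 ∧ c = 0 := by
  rintro ⟨s, i⟩ ⟨t, j⟩ ⟨r, k⟩ ⟨ne1, h1⟩ ⟨ne2, h2⟩ ⟨ne3, h3⟩
  fin_cases s <;> fin_cases t <;> fin_cases r <;>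
    simp [WHRel, Prod.mk.injEq, Fin.ext_iff] at h1 h2 h3 ne1 ne2 ne3 ⊢
  all_goals try rcases h1 with (h1 | h1) | (h1 | h1)
  all_goals try rcases h1 with h1 | h1 | h1
  all_goals try rcases h1 with h1 | h1
  all_goals try rcases h2 with (h2 | h2) | (h2 | h2)
  all_goals try rcases h2 with h2 | h2 | h2
  all_goals try rcases h2 with h2 | h2
  all_goals try rcases h3 with (h3 | h3) | (h3 | h3)
  all_goals try rcases h3 with h3 | h3 | h3
  all_goals try rcases h3 with h3 | h3
  all_goals (first | (revert h1; intro h1) | (have h1 : (0 : ZMod n) = 0 := rfl))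
  all_goals (first | (revert h2; intro h2) | (have h2 : (0 : ZMod n) = 0 := rfl))
  all_goals (first | (revert h3; intro h3) | (have h3 : (0 : ZMod n) = 0 := rfl))
  all_goals first
      | (exfalso; apply ha; linear_combination h1)
      | (exfalso; apply ha; linear_combination -h1)
      | (exfalso; apply ha; linear_combination h2)
      | (exfalso; apply ha; linear_combination -h2)
      | (exfalso; apply ha; linear_combination h3)
      | (exfalso; apply ha; linear_combination -h3)
      | (exfalso; apply ha; linear_combination h1 + h2)
      | (exfalso; apply ha; linear_combination h1 - h2)
      | (exfalso; apply ha; linear_combination -h1 + h2)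
      | (exfalso; apply ha; linear_combination -h1 - h2)
      | (exfalso; apply ha; linear_combination h1 + h3)
      | (exfalso; apply ha; linear_combination h1 - h3)
      | (exfalso; apply ha; linear_combination -h1 + h3)
      | (exfalso; apply ha; linear_combination -h1 - h3)
      | (exfalso; apply ha; linear_combination h2 + h3)
      | (exfalso; apply ha; linear_combination h2 - h3)
      | (exfalso; apply ha; linear_combination -h2 + h3)
      | (exfalso; apply ha; linear_combination -h2 - h3)
      | (exfalso; apply ha; linear_combination h1 + h2 + h3)
      | (exfalso; apply ha; linear_combination h1 + h2 - h3)
      | (exfalso; apply ha; linear_combination h1 - h2 + h3)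
      | (exfalso; apply ha; linear_combination h1 - h2 - h3)
      | (exfalso; apply ha; linear_combination -h1 + h2 + h3)
      | (exfalso; apply ha; linear_combination -h1 + h2 - h3)
      | (exfalso; apply ha; linear_combination -h1 - h2 + h3)
      | (exfalso; apply ha; linear_combination -h1 - h2 - h3)
      | (exfalso; apply h3a; linear_combination h1)
      | (exfalso; apply h3a; linear_combination -h1)
      | (exfalso; apply h3a; linear_combination h2)
      | (exfalso; apply h3a; linear_combination -h2)
      | (exfalso; apply h3a; linear_combination h3)
      | (exfalso; apply h3a; linear_combination -h3)
      | (exfalso; apply h3a; linear_combination h1 + h2)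
      | (exfalso; apply h3a; linear_combination h1 - h2)
      | (exfalso; apply h3a; linear_combination -h1 + h2)
      | (exfalso; apply h3a; linear_combination -h1 - h2)
      | (exfalso; apply h3a; linear_combination h1 + h3)
      | (exfalso; apply h3a; linear_combination h1 - h3)
      | (exfalso; apply h3a; linear_combination -h1 + h3)
      | (exfalso; apply h3a; linear_combination -h1 - h3)
      | (exfalso; apply h3a; linear_combination h2 + h3)
      | (exfalso; apply h3a; linear_combination h2 - h3)
      | (exfalso; apply h3a; linear_combination -h2 + h3)
      | (exfalso; apply h3a; linear_combination -h2 - h3)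
      | (exfalso; apply h3a; linear_combination h1 + h2 + h3)
      | (exfalso; apply h3a; linear_combination h1 + h2 - h3)
      | (exfalso; apply h3a; linear_combination h1 - h2 + h3)
      | (exfalso; apply h3a; linear_combination h1 - h2 - h3)
      | (exfalso; apply h3a; linear_combination -h1 + h2 + h3)
      | (exfalso; apply h3a; linear_combination -h1 + h2 - h3)
      | (exfalso; apply h3a; linear_combination -h1 - h2 + h3)
      | (exfalso; apply h3a; linear_combination -h1 - h2 - h3)
      | (exfalso; apply hb; linear_combination h1)
      | (exfalso; apply hb; linear_combination -h1)
      | (exfalso; apply hb; linear_combination h2)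
      | (exfalso; apply hb; linear_combination -h2)
      | (exfalso; apply hb; linear_combination h3)
      | (exfalso; apply hb; linear_combination -h3)
      | (exfalso; apply hb; linear_combination h1 + h2)
      | (exfalso; apply hb; linear_combination h1 - h2)
      | (exfalso; apply hb; linear_combination -h1 + h2)
      | (exfalso; apply hb; linear_combination -h1 - h2)
      | (exfalso; apply hb; linear_combination h1 + h3)
      | (exfalso; apply hb; linear_combination h1 - h3)
      | (exfalso; apply hb; linear_combination -h1 + h3)
      | (exfalso; apply hb; linear_combination -h1 - h3)
      | (exfalso; apply hb; linear_combination h2 + h3)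
      | (exfalso; apply hb; linear_combination h2 - h3)
      | (exfalso; apply hb; linear_combination -h2 + h3)
      | (exfalso; apply hb; linear_combination -h2 - h3)
      | (exfalso; apply hb; linear_combination h1 + h2 + h3)
      | (exfalso; apply hb; linear_combination h1 + h2 - h3)
      | (exfalso; apply hb; linear_combination h1 - h2 + h3)
      | (exfalso; apply hb; linear_combination h1 - h2 - h3)
      | (exfalso; apply hb; linear_combination -h1 + h2 + h3)
      | (exfalso; apply hb; linear_combination -h1 + h2 - h3)
      | (exfalso; apply hb; linear_combination -h1 - h2 + h3)
      | (exfalso; apply hb; linear_combination -h1 - h2 - h3)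
      | (exfalso; apply hd; linear_combination h1)
      | (exfalso; apply hd; linear_combination -h1)
      | (exfalso; apply hd; linear_combination h2)
      | (exfalso; apply hd; linear_combination -h2)
      | (exfalso; apply hd; linear_combination h3)
      | (exfalso; apply hd; linear_combination -h3)
      | (exfalso; apply hd; linear_combination h1 + h2)
      | (exfalso; apply hd; linear_combination h1 - h2)
      | (exfalso; apply hd; linear_combination -h1 + h2)
      | (exfalso; apply hd; linear_combination -h1 - h2)
      | (exfalso; apply hd; linear_combination h1 + h3)
      | (exfalso; apply hd; linear_combination h1 - h3)
      | (exfalso; apply hd; linear_combination -h1 + h3)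
      | (exfalso; apply hd; linear_combination -h1 - h3)
      | (exfalso; apply hd; linear_combination h2 + h3)
      | (exfalso; apply hd; linear_combination h2 - h3)
      | (exfalso; apply hd; linear_combination -h2 + h3)
      | (exfalso; apply hd; linear_combination -h2 - h3)
      | (exfalso; apply hd; linear_combination h1 + h2 + h3)
      | (exfalso; apply hd; linear_combination h1 + h2 - h3)
      | (exfalso; apply hd; linear_combination h1 - h2 + h3)
      | (exfalso; apply hd; linear_combination h1 - h2 - h3)
      | (exfalso; apply hd; linear_combination -h1 + h2 + h3)
      | (exfalso; apply hd; linear_combination -h1 + h2 - h3)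
      | (exfalso; apply hd; linear_combination -h1 - h2 + h3)
      | (exfalso; apply hd; linear_combination -h1 - h2 - h3)
      | (refine ⟨?_, ?_, ?_⟩ <;> first
      | linear_combination h1
      | linear_combination -h1
      | linear_combination h2
      | linear_combination -h2
      | linear_combination h3
      | linear_combination -h3
      | linear_combination h1 + h2
      | linear_combination h1 - h2
      | linear_combination -h1 + h2
      | linear_combination -h1 - h2
      | linear_combination h1 + h3
      | linear_combination h1 - h3
      | linear_combination -h1 + h3
      | linear_combination -h1 - h3
      | linear_combination h2 + h3
      | linear_combination h2 - h3
      | linear_combination -h2 + h3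
      | linear_combination -h2 - h3
      | linear_combination h1 + h2 + h3
      | linear_combination h1 + h2 - h3
      | linear_combination h1 - h2 + h3
      | linear_combination h1 - h2 - h3
      | linear_combination -h1 + h2 + h3
      | linear_combination -h1 + h2 - h3
      | linear_combination -h1 - h2 + h3
      | linear_combination -h1 - h2 - h3)

section helpers
variable {n : ℕ} {a b c d : ZMod n}

lemma adjAB (i : ZMod n) : (WH n a b c d).Adj (0, i) (1, i) :=
  ⟨fun h => absurd (congrArg Prod.fst h) (show ¬(0 : Fin 3) = 1 by decide),
    Or.inl (Or.inr (Or.inl ⟨rfl, rfl, rfl⟩))⟩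

lemma adjAC (i : ZMod n) : (WH n a b c d).Adj (0, i) (2, i) :=
  ⟨fun h => absurd (congrArg Prod.fst h) (show ¬(0 : Fin 3) = 2 by decide),
    Or.inl (Or.inr (Or.inr (Or.inl ⟨rfl, rfl, rfl⟩)))⟩

lemma adjBC {i j : ZMod n} (h : j = i + b ∨ j = i + c ∨ j = i + d) :
    (WH n a b c d).Adj (1, i) (2, j) :=
  ⟨fun hh => absurd (congrArg Prod.fst hh) (show ¬(1 : Fin 3) = 2 by decide),
    Or.inl (Or.inr (Or.inr (Or.inr ⟨rfl, rfl, h⟩)))⟩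

lemma adjAA {i j : ZMod n} (hne : i ≠ j) (h : j = i + a ∨ j = i - a) :
    (WH n a b c d).Adj (0, i) (0, j) :=
  ⟨fun hh => hne (congrArg Prod.snd hh), Or.inl (Or.inl ⟨rfl, rfl, h⟩)⟩

/-- every edge with equal indices has a common neighbour (when `c = 0`). -/
lemma common_of_same (hc : c = 0) {u v : Fin 3 × ZMod n}
    (h : (WH n a b c d).Adj u v) (he : u.2 = v.2) :
    ∃ w, (WH n a b c d).Adj u w ∧ (WH n a b c d).Adj v w := by
  obtain ⟨s, i⟩ := u
  obtain ⟨t, j⟩ := v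
  simp only at he
  subst he
  have hBC : (WH n a b c d).Adj (1, i) (2, i) := adjBC (Or.inr (Or.inl (by rw [hc, add_zero])))
  obtain ⟨hne, hrel | hrel⟩ := h <;>
    rcases hrel with ⟨hs, ht, -⟩ | ⟨hs, ht, -⟩ | ⟨hs, ht, -⟩ | ⟨hs, ht, -⟩ <;>
    simp only at hs ht <;> subst hs <;> subst ht
  · exact absurd rfl hne
  · exact ⟨(2, i), adjAC i, hBC⟩
  · exact ⟨(1, i), adjAB i, hBC.symm⟩
  · exact ⟨(0, i), (adjAB i).symm, (adjAC i).symm⟩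
  · exact absurd rfl hne
  · exact ⟨(2, i), hBC, adjAC i⟩
  · exact ⟨(1, i), hBC.symm, adjAB i⟩
  · exact ⟨(0, i), (adjAC i).symm, (adjAB i).symm⟩

end helpers

section parity
variable {m : ℕ}

/-- The parity ring hom `ZMod (4*m) →+* ZMod 2`. -/
noncomputable def par (m : ℕ) : ZMod (4 * m) →+* ZMod 2 :=
  ZMod.castHom (show (2 : ℕ) ∣ 4 * m from ⟨2 * m, by ring⟩) (ZMod 2)

lemma par_odd {x : ZMod (4 * m)} (hx : Odd x) : par m x = 1 := by
  obtain ⟨k, hk⟩ := hx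
  rw [hk, map_add, map_mul, map_one, map_ofNat]
  rw [show ((2 : ZMod 2)) = 0 from rfl, zero_mul, zero_add]

lemma odd_ne_zero {x : ZMod (4 * m)} (hx : Odd x) : x ≠ 0 := by
  intro h
  have h1 := par_odd hx
  rw [h, map_zero] at h1
  exact absurd h1 (by decide)

lemma odd_three {x : ZMod (4 * m)} (hx : Odd x) : Odd (x + x + x) := by
  obtain ⟨k, hk⟩ := hx
  exact ⟨k + k + k + 1, by rw [hk]; ring⟩

lemma par_step {x y s : ZMod (4 * m)} (hs : Odd s) (h : y = x + s ∨ y = x - s) :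
    par m y = par m x + 1 := by
  rcases h with h | h
  · rw [h, map_add, par_odd hs]
  · rw [h, map_sub, par_odd hs]
    exact (by decide : ∀ z : ZMod 2, z - 1 = z + 1) _

lemma par_swap {x y : ZMod 2} (h : x = y + 1) : y = x + 1 := by
  rw [h]; exact (by decide : ∀ z : ZMod 2, z = z + 1 + 1) _

/-- in `WH (4*m) a b c d` with `c = 0` and `a b d` odd, edges with distinct
indices flip parity. -/
lemma parflip {a b c d : ZMod (4 * m)} (hc : c = 0) (hao : Odd a) (hbo : Odd b) (hdo : Odd d)
    {u v : Fin 3 × ZMod (4 * m)} (h : (WH (4 * m) a b c d).Adj u v) (hne : u.2 ≠ v.2) :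
    par m v.2 = par m u.2 + 1 := by
  obtain ⟨-, hrel | hrel⟩ := h <;>
    rcases hrel with ⟨-, -, h | h⟩ | ⟨-, -, h⟩ | ⟨-, -, h⟩ | ⟨-, -, h | h | h⟩
  · exact par_step hao (Or.inl h)
  · exact par_step hao (Or.inr h)
  · exact absurd h.symm hne
  · exact absurd h.symm hne
  · exact par_step hbo (Or.inl h)
  · exact absurd (by rw [h, hc, add_zero]) hne
  · exact par_step hdo (Or.inl h)
  · exact par_swap (par_step hao (Or.inl h))
  · exact par_swap (par_step hao (Or.inr h))
  · exact absurd h hne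
  · exact absurd h hne
  · exact par_swap (par_step hbo (Or.inl h))
  · exact absurd (by rw [h, hc, add_zero] : u.2 = v.2) hne
  · exact par_swap (par_step hdo (Or.inl h))

end parity

theorem family_one_not_iso_family_two (m : ℕ) (hm : Odd m) (hm1 : 1 < m)
    (a b c d : ZMod (4 * m))
    (haodd : Odd a) (hbodd : Odd b) (hdodd : Odd d) (hceven : Even c)
    (hd : d = 2 * a + b) (h2c : 2 * c = 3 * a + 3 * b) :
    IsEmpty (WH (4 * m) a b c d ≃g
      WH (4 * m) 2 ((m : ZMod (4 * m)) - 2) 0 ((m : ZMod (4 * m)) + 2)) := by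
  constructor
  intro f
  set G2 : SimpleGraph (Fin 3 × ZMod (4 * m)) :=
    WH (4 * m) 2 ((m : ZMod (4 * m)) - 2) 0 ((m : ZMod (4 * m)) + 2) with hG2
  -- nonvanishing facts for the parameters of the first graph
  have ha1 : a ≠ 0 := odd_ne_zero haodd
  have h3a1 : a + a + a ≠ 0 := odd_ne_zero (odd_three haodd)
  have hb1 : b ≠ 0 := odd_ne_zero hbodd
  have hd1 : d ≠ 0 := odd_ne_zero hdodd
  -- nonvanishing facts for the parameters of the second graph
  obtain ⟨p, hp⟩ := hm
  have hb2odd : Odd ((m : ZMod (4 * m)) - 2) :=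
    ⟨(p : ZMod (4 * m)) - 1, by push_cast [hp]; ring⟩
  have hd2odd : Odd ((m : ZMod (4 * m)) + 2) :=
    ⟨(p : ZMod (4 * m)) + 1, by push_cast [hp]; ring⟩
  have hb2 : (m : ZMod (4 * m)) - 2 ≠ 0 := odd_ne_zero hb2odd
  have hd2 : (m : ZMod (4 * m)) + 2 ≠ 0 := odd_ne_zero hd2odd
  have ha2 : (2 : ZMod (4 * m)) ≠ 0 := by
    intro h
    have h' : ((2 : ℕ) : ZMod (4 * m)) = 0 := by push_cast; exact h
    rw [ZMod.natCast_eq_zero_iff] at h'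
    have := Nat.le_of_dvd (by norm_num) h'
    omega
  have h3a2 : (2 : ZMod (4 * m)) + 2 + 2 ≠ 0 := by
    intro h
    have h' : ((6 : ℕ) : ZMod (4 * m)) = 0 := by push_cast; linear_combination h
    rw [ZMod.natCast_eq_zero_iff] at h'
    have := Nat.le_of_dvd (by norm_num) h'
    omega
  -- transfer of adjacency through the isomorphism
  have fwd : ∀ {x y}, G2.Adj x y → (WH (4 * m) a b c d).Adj (f.symm x) (f.symm y) :=
    fun h => f.symm.map_rel_iff.mpr h
  by_cases hc : c = 0
  · -- both graphs have all triangles on the triples; transport the parity colouring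
    have keyEq : ∀ {x y}, G2.Adj x y → (∃ w, G2.Adj x w ∧ G2.Adj y w) →
        par m (f.symm y).2 = par m (f.symm x).2 := by
      rintro x y hxy ⟨w, hw1, hw2⟩
      have h := tri ha1 h3a1 hb1 hd1 (fwd hxy) (fwd hw2) (fwd hw1)
      rw [h.1]
    have keyNe : ∀ {x y}, G2.Adj x y → (¬ ∃ w, G2.Adj x w ∧ G2.Adj y w) →
        par m (f.symm y).2 = par m (f.symm x).2 + 1 := by
      intro x y hxy hno
      have hadj := fwd hxy
      refine parflip hc haodd hbodd hdodd hadj ?_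
      intro he
      obtain ⟨w, hw1, hw2⟩ := common_of_same hc hadj he
      refine hno ⟨f w, ?_, ?_⟩
      · have h1 := f.map_rel_iff.mpr hw1
        rwa [f.apply_symm_apply] at h1
      · have h2 := f.map_rel_iff.mpr hw2
        rwa [f.apply_symm_apply] at h2
    set ξ : ZMod (4 * m) → ZMod 2 := fun i => par m (f.symm ((0 : Fin 3), i)).2 with hξ
    have eq1 : ∀ i, par m (f.symm ((1 : Fin 3), i)).2 = ξ i := fun i =>
      keyEq (adjAB i) ⟨(2, i), adjAC i, adjBC (Or.inr (Or.inl (add_zero i).symm))⟩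
    have eq2 : ∀ i, par m (f.symm ((2 : Fin 3), i)).2 = ξ i := fun i =>
      keyEq (adjAC i) ⟨(1, i), adjAB i, (adjBC (Or.inr (Or.inl (add_zero i).symm))).symm⟩
    have step2 : ∀ i, ξ (i + 2) = ξ i + 1 := by
      intro i
      have hadj : G2.Adj (0, i) (0, i + 2) :=
        adjAA (fun h => ha2 (by linear_combination -h)) (Or.inl rfl)
      refine keyNe hadj ?_
      rintro ⟨w, hw1, hw2⟩
      exact ha2 (by linear_combination -(tri ha2 h3a2 hb2 hd2 hadj hw2 hw1).1)
    have stepB : ∀ i, ξ (i + ((m : ZMod (4 * m)) - 2)) = ξ i + 1 := by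
      intro i
      have hadj : G2.Adj (1, i) (2, i + ((m : ZMod (4 * m)) - 2)) := adjBC (Or.inl rfl)
      have hno : ¬ ∃ w, G2.Adj (1, i) w ∧ G2.Adj (2, i + ((m : ZMod (4 * m)) - 2)) w := by
        rintro ⟨w, hw1, hw2⟩
        exact hb2 (by linear_combination -(tri ha2 h3a2 hb2 hd2 hadj hw2 hw1).1)
      have h := keyNe hadj hno
      rw [eq2, eq1] at h
      exact h
    have stepD : ∀ i, ξ (i + ((m : ZMod (4 * m)) + 2)) = ξ i + 1 := by
      intro i
      have hadj : G2.Adj (1, i) (2, i + ((m : ZMod (4 * m)) + 2)) :=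
        adjBC (Or.inr (Or.inr rfl))
      have hno : ¬ ∃ w, G2.Adj (1, i) w ∧ G2.Adj (2, i + ((m : ZMod (4 * m)) + 2)) w := by
        rintro ⟨w, hw1, hw2⟩
        exact hd2 (by linear_combination -(tri ha2 h3a2 hb2 hd2 hadj hw2 hw1).1)
      have h := keyNe hadj hno
      rw [eq2, eq1] at h
      exact h
    have chain : ∀ k : ℕ, ξ ((2 * k : ℕ) : ZMod (4 * m)) = ξ 0 + (k : ZMod 2) := by
      intro k
      induction k with
      | zero => simp
      | succ q ih =>
        have hcast : ((2 * (q + 1) : ℕ) : ZMod (4 * m)) = ((2 * q : ℕ) : ZMod (4 * m)) + 2 := by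
          push_cast; ring
        rw [hcast, step2, ih]
        push_cast
        ring
    have hm2 : (m : ZMod 2) = 1 := by
      rw [hp]
      push_cast
      rw [show ((2 : ZMod 2)) = 0 from rfl, zero_mul, zero_add]
    have hlast : ξ ((2 * m : ℕ) : ZMod (4 * m)) = ξ 0 + 1 := by
      rw [chain m, hm2]
    have e1 : ξ (0 + ((m : ZMod (4 * m)) + 2)) = ξ 0 + 1 := stepD 0
    have e2 : ξ ((0 + ((m : ZMod (4 * m)) + 2)) + ((m : ZMod (4 * m)) - 2)) = ξ 0 + 1 + 1 := by
      rw [stepB, e1]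
    have ecast : ((0 + ((m : ZMod (4 * m)) + 2)) + ((m : ZMod (4 * m)) - 2))
        = ((2 * m : ℕ) : ZMod (4 * m)) := by push_cast; ring
    rw [ecast, hlast] at e2
    exact absurd (by linear_combination e2 : (0 : ZMod 2) = 1) (by decide)
  · -- the second graph has a triangle, so the first one must have `c = 0`
    have t1 : G2.Adj (0, 0) (1, 0) := adjAB 0
    have t2 : G2.Adj (1, 0) (2, 0) := adjBC (Or.inr (Or.inl (add_zero 0).symm))
    have t3 : G2.Adj (0, 0) (2, 0) := adjAC 0
    exact hc (tri ha1 h3a1 hb1 hd1 (fwd t1) (fwd t2) (fwd t3)).2.2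
end
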